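/- On a 4-dimensional Riemannian almost product manifold with tr P = 0, every curvature-like tensor L that is a Riemannian P-tensor has the form L = (1/8){τ(L)(π₁+π₂) + τ*(L)π₃}, where τ(L) and τ*(L) are the scalar curvature and associated scalar curvature of L. -/

import Mathlib

open scoped BigOperators

/-- An abstract (local) model of a Riemannian almost product manifold of
dimension `n`: `V` plays the role of the module of smooth vector fields over
the commutative ℝ-algebra `C` of smooth functions, `g` is the Riemannian
metric, `P` the almost product structure, `D` the directional derivative of
functions, `bracket` the Lie bracket of vector fields, `nabla` the
Levi-Civita connection of `g`, and `e`, `e'` a frame together with its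
`g`-reciprocal frame (used to form traces `g^{ij}·`). -/
structure RAPM (n : ℕ) where
  V : Type
  C : Type
  [instAG : AddCommGroup V]
  [instCR : CommRing C]
  [instAlg : Algebra ℝ C]
  [instMod : Module C V]
  g : V →ₗ[C] V →ₗ[C] C
  P : V →ₗ[C] V
  gSymm : ∀ x y, g x y = g y x
  Pinvol : ∀ x, P (P x) = x
  Piso : ∀ x y, g (P x) (P y) = g x y
  D : V → C → C
  Dadd : ∀ x f h, D x (f + h) = D x f + D x h
  bracket : V → V → V
  bracketD : ∀ x y f, D (bracket x y) f = D x (D y f) - D y (D x f)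
  jacobi : ∀ x y z,
    bracket x (bracket y z) + bracket y (bracket z x) + bracket z (bracket x y) = 0
  nabla : V → V → V
  nabla_add₁ : ∀ x y z, nabla (x + y) z = nabla x z + nabla y z
  nabla_smul₁ : ∀ (f : C) x y, nabla (f • x) y = f • nabla x y
  nabla_add₂ : ∀ x y z, nabla x (y + z) = nabla x y + nabla x z
  nabla_leibniz : ∀ x (f : C) y, nabla x (f • y) = D x f • y + f • nabla x y
  nabla_metric : ∀ x y z, D x (g y z) = g (nabla x y) z + g y (nabla x z)
  torsion_free : ∀ x y, nabla x y - nabla y x = bracket x y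
  e : Fin n → V
  e' : Fin n → V
  dual_frame : ∀ i j, g (e' i) (e j) = if i = j then 1 else 0
  frame_span : ∀ v : V, v = ∑ i, g (e' i) v • e i

namespace RAPM

attribute [instance] RAPM.instAG RAPM.instCR RAPM.instAlg RAPM.instMod

variable {n : ℕ} (Q : RAPM n)

/-- The fundamental tensor `F(x,y,z) = g((∇ₓP)y, z)`. -/
def F (x y z : Q.V) : Q.C := Q.g (Q.nabla x (Q.P y) - Q.P (Q.nabla x y)) z

/-- The curvature operator `R(x,y)z`. -/
def R (x y z : Q.V) : Q.V :=
  Q.nabla x (Q.nabla y z) - Q.nabla y (Q.nabla x z) - Q.nabla (Q.bracket x y) z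

/-- The (0,4) curvature tensor `R(x,y,z,w) = g(R(x,y)z, w)`. -/
def Rm (x y z w : Q.V) : Q.C := Q.g (Q.R x y z) w

/-- `tr P = g^{ij} g(e_i, P e_j)`. -/
def trP : Q.C := ∑ i, Q.g (Q.e' i) (Q.P (Q.e i))

/-- The Lee form `θ(x) = g^{ij} F(e_i, e_j, x)`. -/
def theta (x : Q.V) : Q.C := ∑ i, Q.F (Q.e' i) (Q.e i) x

/-- The covariant derivative `(∇ₓθ)y`. -/
def nablaTheta (x y : Q.V) : Q.C := Q.D x (Q.theta y) - Q.theta (Q.nabla x y)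

/-- `θ` is closed iff `(∇ₓθ)y = (∇_yθ)x`. -/
def closed : Prop := ∀ x y, Q.nablaTheta x y = Q.nablaTheta y x

/-- The covariant derivative `(∇ₓF)(y,z,w)`. -/
def nablaF (x y z w : Q.V) : Q.C :=
  Q.D x (Q.F y z w) - Q.F (Q.nabla x y) z w - Q.F y (Q.nabla x z) w
    - Q.F y z (Q.nabla x w)

def psi1 (S : Q.V → Q.V → Q.C) (x y z w : Q.V) : Q.C :=
  Q.g y z * S x w - Q.g x z * S y w + S y z * Q.g x w - S x z * Q.g y w

def psi2 (S : Q.V → Q.V → Q.C) (x y z w : Q.V) : Q.C :=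
  Q.psi1 S x y (Q.P z) (Q.P w)

/-- The associated metric `g̃(x,y) = g(x,Py)`. -/
def gP (x y : Q.V) : Q.C := Q.g x (Q.P y)

noncomputable def pi1 (x y z w : Q.V) : Q.C :=
  ((1 : ℝ)/2) • Q.psi1 (fun a b => Q.g a b) x y z w

noncomputable def pi2 (x y z w : Q.V) : Q.C :=
  ((1 : ℝ)/2) • Q.psi2 (fun a b => Q.g a b) x y z w

def pi3 (x y z w : Q.V) : Q.C := Q.psi1 Q.gP x y z w

/-- The Ricci tensor `ρ(L)(y,z) = g^{ij} L(e_i,y,z,e_j)` of a (0,4)-tensor. -/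
def ric (L : Q.V → Q.V → Q.V → Q.V → Q.C) (y z : Q.V) : Q.C :=
  ∑ i, L (Q.e' i) y z (Q.e i)

/-- The scalar curvature `τ(L) = g^{ij} ρ(L)(e_i,e_j)`. -/
def scal (L : Q.V → Q.V → Q.V → Q.V → Q.C) : Q.C := ∑ i, Q.ric L (Q.e i) (Q.e' i)

/-- The associated Ricci tensor `ρ*(L)(y,z) = g^{ij} L(e_i,y,z,Pe_j)`. -/
def ricStar (L : Q.V → Q.V → Q.V → Q.V → Q.C) (y z : Q.V) : Q.C :=
  ∑ i, L (Q.e' i) y z (Q.P (Q.e i))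

/-- The associated scalar curvature `τ*(L)`. -/
def scalStar (L : Q.V → Q.V → Q.V → Q.V → Q.C) : Q.C :=
  ∑ i, Q.ricStar L (Q.e i) (Q.e' i)

/-- The trace `g^{ij} S(e_i,e_j)` of a (0,2)-tensor. -/
def trB (S : Q.V → Q.V → Q.C) : Q.C := ∑ i, S (Q.e i) (Q.e' i)

/-- The divergence of a vector field. -/
def divg (v : Q.V) : Q.C := ∑ i, Q.g (Q.e' i) (Q.nabla (Q.e i) v)

/-- A curvature-like tensor. -/
def curvatureLike (L : Q.V → Q.V → Q.V → Q.V → Q.C) : Prop :=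
  (∀ x y z w, L x y z w = - L y x z w) ∧
  (∀ x y z w, L x y z w = - L x y w z) ∧
  (∀ x y z w, L x y z w + L y z x w + L z x y w = 0)

/-- A Riemannian P-tensor. -/
def isPtensor (L : Q.V → Q.V → Q.V → Q.V → Q.C) : Prop :=
  Q.curvatureLike L ∧ ∀ x y z w, L x y (Q.P z) (Q.P w) = L x y z w

/-- The defining condition of the Naveira class `W̄₃` (dimension `n`, so the
factor `1/(2n)` of the paper is `1/n` here). -/
def W3 : Prop :=
  (∀ x y z, Q.F x y z =
    ((1 : ℝ)/(n : ℝ)) • ((Q.g x y + Q.g x (Q.P y)) * Q.theta z +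
      (Q.g x z + Q.g x (Q.P z)) * Q.theta y)) ∧
  (∀ x, Q.theta (Q.P x) = - Q.theta x)

/-- The defining condition of the Naveira class `W̄₆`. -/
def W6 : Prop :=
  (∀ x y z, Q.F x y z =
    ((1 : ℝ)/(n : ℝ)) • ((Q.g x y - Q.g x (Q.P y)) * Q.theta z +
      (Q.g x z - Q.g x (Q.P z)) * Q.theta y)) ∧
  (∀ x, Q.theta (Q.P x) = Q.theta x)

end RAPM

section Aux
open Finset
variable {Q : RAPM 4}

/-- `1/2` in the algebra. -/
noncomputable def hf (Q : RAPM 4) : Q.C := algebraMap ℝ Q.C (1/2 : ℝ)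

lemma hf_two {Q : RAPM 4} : (hf Q) * 2 = 1 := by
  rw [hf, ← map_ofNat (algebraMap ℝ Q.C) 2, ← map_mul]
  norm_num

lemma half_cancel {Q : RAPM 4} (s : Q.C) (h : s + s = 0) : s = 0 := by
  have h2 : (2:Q.C) * s = 0 := by linear_combination h
  calc s = (hf Q * 2) * s := by rw [hf_two, one_mul]
    _ = hf Q * ((2:Q.C) * s) := by ring
    _ = 0 := by rw [h2, mul_zero]

/-- contraction against the frame -/
lemma ctrE (φ : Q.V →ₗ[Q.C] Q.C) (v : Q.V) :
    ∑ i, Q.g (Q.e' i) v * φ (Q.e i) = φ v := by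
  conv_rhs => rw [Q.frame_span v]
  rw [map_sum]
  exact Finset.sum_congr rfl fun i _ => by rw [map_smul, smul_eq_mul]

/-- nondegeneracy -/
lemma g_nondeg {Q : RAPM 4} (x : Q.V) (h : ∀ w, Q.g w x = 0) : x = 0 := by
  have hs := Q.frame_span x
  have h' : ∀ i, Q.g (Q.e' i) x = 0 := fun i => h _
  rw [hs]; simp [h']

/-- expansion in the reciprocal frame -/
lemma frame_span' {Q : RAPM 4} (v : Q.V) : v = ∑ i, Q.g (Q.e i) v • Q.e' i := by
  have key : ∀ w, Q.g w ((∑ i, Q.g (Q.e i) v • Q.e' i) - v) = 0 := by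
    intro w
    rw [map_sub, sub_eq_zero, map_sum]
    have h1 : Q.g w v = ∑ i, Q.g (Q.e' i) w * Q.g (Q.e i) v := by
      conv_lhs => rw [Q.frame_span w]
      rw [map_sum, LinearMap.sum_apply]
      exact Finset.sum_congr rfl fun i _ => by
        rw [map_smul, LinearMap.smul_apply, smul_eq_mul]
    rw [h1]
    exact Finset.sum_congr rfl fun i _ => by
      rw [map_smul, smul_eq_mul, Q.gSymm w (Q.e' i)]; ring
  exact (sub_eq_zero.mp (g_nondeg _ key)).symm

/-- contraction against the reciprocal frame -/
lemma ctrE' (φ : Q.V →ₗ[Q.C] Q.C) (v : Q.V) :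
    ∑ i, Q.g (Q.e i) v * φ (Q.e' i) = φ v := by
  conv_rhs => rw [frame_span' v]
  rw [map_sum]
  exact Finset.sum_congr rfl fun i _ => by rw [map_smul, smul_eq_mul]

lemma sum_gee' : ∑ i, Q.g (Q.e' i) (Q.e i) = 4 := by
  have : ∀ i : Fin 4, Q.g (Q.e' i) (Q.e i) = 1 := fun i => by
    rw [Q.dual_frame]; simp
  simp [this]

lemma sum_gee'2 : ∑ i, Q.g (Q.e i) (Q.e' i) = 4 := by
  have : ∀ i : Fin 4, Q.g (Q.e i) (Q.e' i) = 1 := fun i => by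
    rw [Q.gSymm, Q.dual_frame]; simp
  simp [this]

end Aux

section Proj
open Finset
variable {Q : RAPM 4}

/-- the projection on the `+1` eigenspace of `P` -/
noncomputable def pp (Q : RAPM 4) : Q.V →ₗ[Q.C] Q.V := hf Q • (LinearMap.id + Q.P)
/-- the projection on the `-1` eigenspace of `P` -/
noncomputable def qq (Q : RAPM 4) : Q.V →ₗ[Q.C] Q.V := hf Q • (LinearMap.id - Q.P)

lemma pp_apply (v : Q.V) : pp Q v = hf Q • (v + Q.P v) := rfl
lemma qq_apply (v : Q.V) : qq Q v = hf Q • (v - Q.P v) := rfl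

lemma two_smul_hf (v : Q.V) : hf Q • (v + v) = v := by
  rw [← two_smul Q.C v, smul_smul, hf_two, one_smul]

lemma pq_compl (v : Q.V) : pp Q v + qq Q v = v := by
  rw [pp_apply, qq_apply, ← smul_add]
  have : v + Q.P v + (v - Q.P v) = v + v := by abel
  rw [this, two_smul_hf]

lemma P_pp (v : Q.V) : Q.P (pp Q v) = pp Q v := by
  rw [pp_apply, map_smul, map_add, Q.Pinvol, add_comm]
lemma P_qq (v : Q.V) : Q.P (qq Q v) = - qq Q v := by
  rw [qq_apply, map_smul, map_sub, Q.Pinvol, ← smul_neg, neg_sub]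
lemma pp_idem (v : Q.V) : pp Q (pp Q v) = pp Q v := by
  conv_lhs => rw [pp_apply (pp Q v), P_pp, two_smul_hf]
lemma qq_idem (v : Q.V) : qq Q (qq Q v) = qq Q v := by
  conv_lhs => rw [qq_apply (qq Q v), P_qq, sub_neg_eq_add, two_smul_hf]
lemma pp_qq (v : Q.V) : pp Q (qq Q v) = 0 := by
  rw [pp_apply (qq Q v), P_qq, add_neg_cancel, smul_zero]
lemma qq_pp (v : Q.V) : qq Q (pp Q v) = 0 := by
  rw [qq_apply (pp Q v), P_pp, sub_self, smul_zero]

lemma g_P (u v : Q.V) : Q.g (Q.P u) v = Q.g u (Q.P v) := by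
  conv_lhs => rw [show v = Q.P (Q.P v) from (Q.Pinvol v).symm]
  rw [Q.Piso]

lemma g_pp (u v : Q.V) : Q.g (pp Q u) v = Q.g u (pp Q v) := by
  rw [pp_apply, pp_apply, map_smul, map_add, LinearMap.smul_apply, LinearMap.add_apply,
    map_smul, map_add, g_P]
lemma g_qq (u v : Q.V) : Q.g (qq Q u) v = Q.g u (qq Q v) := by
  rw [qq_apply, qq_apply, map_smul, map_sub, LinearMap.smul_apply, LinearMap.sub_apply,
    map_smul, map_sub, g_P]

lemma hf_four : hf Q * 4 = 2 := by
  have : (4 : Q.C) = 2 * 2 := by norm_num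
  rw [this, ← mul_assoc, hf_two, one_mul]

lemma tr_pp (htr : Q.trP = 0) : ∑ i, Q.g (Q.e' i) (pp Q (Q.e i)) = 2 := by
  have : ∀ i : Fin 4, Q.g (Q.e' i) (pp Q (Q.e i)) =
      hf Q * (Q.g (Q.e' i) (Q.e i) + Q.g (Q.e' i) (Q.P (Q.e i))) := fun i => by
    rw [pp_apply, map_smul, map_add, smul_eq_mul]
  rw [Finset.sum_congr rfl fun i _ => this i, ← Finset.mul_sum, Finset.sum_add_distrib,
    sum_gee']
  have h2 : ∑ i, Q.g (Q.e' i) (Q.P (Q.e i)) = 0 := htr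
  rw [h2, add_zero, hf_four]

lemma tr_qq (htr : Q.trP = 0) : ∑ i, Q.g (Q.e' i) (qq Q (Q.e i)) = 2 := by
  have : ∀ i : Fin 4, Q.g (Q.e' i) (qq Q (Q.e i)) =
      hf Q * (Q.g (Q.e' i) (Q.e i) - Q.g (Q.e' i) (Q.P (Q.e i))) := fun i => by
    rw [qq_apply, map_smul, map_sub, smul_eq_mul]
  rw [Finset.sum_congr rfl fun i _ => this i, ← Finset.mul_sum, Finset.sum_sub_distrib,
    sum_gee']
  have h2 : ∑ i, Q.g (Q.e' i) (Q.P (Q.e i)) = 0 := htr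
  rw [h2, sub_zero, hf_four]

/-- Both double traces of a bilinear expression agree. -/
lemma trace_swap (B : Q.V → Q.V → Q.C)
    (h1 : ∀ (c : Fin 4 → Q.C) (w : Q.V), B (∑ j, c j • Q.e j) w = ∑ j, c j * B (Q.e j) w)
    (h2 : ∀ (v : Q.V) (c : Fin 4 → Q.C), B v (∑ j, c j • Q.e j) = ∑ j, c j * B v (Q.e j)) :
    ∑ i, B (Q.e i) (Q.e' i) = ∑ i, B (Q.e' i) (Q.e i) := by
  have lhs : ∀ i, B (Q.e i) (Q.e' i) = ∑ j, Q.g (Q.e' j) (Q.e' i) * B (Q.e i) (Q.e j) :=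
    fun i => by conv_lhs => rw [Q.frame_span (Q.e' i)]; rw [h2]
  have rhs : ∀ i, B (Q.e' i) (Q.e i) = ∑ j, Q.g (Q.e' j) (Q.e' i) * B (Q.e j) (Q.e i) :=
    fun i => by conv_lhs => rw [Q.frame_span (Q.e' i)]; rw [h1]
  rw [Finset.sum_congr rfl fun i _ => lhs i, Finset.sum_congr rfl fun i _ => rhs i]
  rw [Finset.sum_comm]
  exact Finset.sum_congr rfl fun j _ => Finset.sum_congr rfl fun i _ => by
    rw [Q.gSymm (Q.e' i) (Q.e' j)]

end Proj

section Sym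
open Finset
variable {Q : RAPM 4} (L : Q.V →ₗ[Q.C] Q.V →ₗ[Q.C] Q.V →ₗ[Q.C] Q.V →ₗ[Q.C] Q.C)

namespace PT

variable (hL : Q.isPtensor (fun x y z w => L x y z w))
include hL

/-- first pair symmetry ingredient -/
lemma midswap (x y z w : Q.V) :
    L x y z w - L z w x y = L x z y w - L y w x z := by
  obtain ⟨⟨A1, B1, Bi⟩, _⟩ := hL
  simp only at A1 B1 Bi
  linear_combination Bi x y z w + Bi y z w x - B1 y z x w
    - A1 x z y w - B1 z w x y + B1 y w x z - A1 y w z x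

lemma fswap1 (x y z w : Q.V) :
    L x y z w - L z w x y = - (L y x z w - L z w y x) := by
  obtain ⟨⟨A1, B1, Bi⟩, _⟩ := hL
  simp only at A1 B1
  linear_combination A1 x y z w - B1 z w x y

/-- pair symmetry -/
lemma pairsym (x y z w : Q.V) : L x y z w = L z w x y := by
  have h1 := midswap L hL x y z w           -- f(xyzw) = f(xzyw)
  have h2 := fswap1 L hL x z y w            -- f(xzyw) = -f(zxyw)
  have h3 := midswap L hL z x y w           -- f(zxyw) = f(zyxw)
  have h4 := fswap1 L hL z y x w            -- f(zyxw) = -f(yzxw)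
  have h5 := midswap L hL y z x w           -- f(yzxw) = f(yxzw)
  have h6 := fswap1 L hL y x z w            -- f(yxzw) = -f(xyzw)
  have hdouble : (L x y z w - L z w x y) + (L x y z w - L z w x y) = 0 := by
    linear_combination h1 + h2 - h3 - h4 + h5 + h6
  linear_combination half_cancel _ hdouble

end PT
end Sym

section Minors
open Finset
variable {R : Type} [CommRing R] [Algebra ℝ R]

lemma alg_six_inv : (6 : R) * algebraMap ℝ R ((6:ℝ)⁻¹) = 1 := by
  rw [← map_ofNat (algebraMap ℝ R) 6, ← map_mul]
  norm_num

lemma minor_0_0 (m : Fin 4 → Fin 4 → R)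
    (hid : ∀ i j : Fin 4, m i 0 * m 0 j + m i 1 * m 1 j + m i 2 * m 2 j + m i 3 * m 3 j = m i j)
    (htr : m 0 0 + m 1 1 + m 2 2 + m 3 3 = 2) :
    m 1 1 * (m 2 2 * m 3 3 - m 2 3 * m 3 2) - m 1 2 * (m 2 1 * m 3 3 - m 2 3 * m 3 1) + m 1 3 * (m 2 1 * m 3 2 - m 2 2 * m 3 1) = 0 := by
  linear_combination ((algebraMap ℝ R ((6:ℝ)⁻¹))) * ((2 + 3*(m 0 0 + m 1 1 + m 2 2 + m 3 3 - 2) + (m 0 0 + m 1 1 + m 2 2 + m 3 3 - 2)*(m 0 0 + m 1 1 + m 2 2 + m 3 3 - 2)) * (htr) + (-4 - 3*(m 0 0 + m 1 1 + m 2 2 + m 3 3 - 2)) * (hid 0 0) + (-4 - 3*(m 0 0 + m 1 1 + m 2 2 + m 3 3 - 2)) * (hid 1 1) + (-4 - 3*(m 0 0 + m 1 1 + m 2 2 + m 3 3 - 2)) * (hid 2 2) + (-4 - 3*(m 0 0 + m 1 1 + m 2 2 + m 3 3 - 2)) * (hid 3 3) + (2 * m 0 0) * (hid 0 0) + (2 *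 m 0 1) * (hid 1 0) + (2 * m 0 2) * (hid 2 0) + (2 * m 0 3) * (hid 3 0) + (2 * m 1 0) * (hid 0 1) + (2 * m 1 1) * (hid 1 1) + (2 * m 1 2) * (hid 2 1) + (2 * m 1 3) * (hid 3 1) + (2 * m 2 0) * (hid 0 2) + (2 * m 2 1) * (hid 1 2) + (2 * m 2 2) * (hid 2 2) + (2 * m 2 3) * (hid 3 2) + (2 * m 3 0) * (hid 0 3) + (2 * m 3 1) * (hid 1 3) + (2 * m 3 2) * (hid 2 3) + (2 * m 3 3) * (hid 3 3) + ((-3 - 3*(m 0 0 + m 1 1 + m 2 2 + m 3 3 - 2)) * m 0 0) * (htr) + (3 * m 0 0) * (hid 0 0) + (3 * m 0 0) * (hid 1 1) + (3 * m 0 0) * (hid 2 2) + (3 * m 0 0) * (hid 3 3) + (6 + 6*(m 0 0 + m 1 1 + m 2 2 + m 3 3 - 2)) * (hid 0 0) + (-6 * m 0 0) * (hid 0 0) + (-6 * m 0 1) * (hid 1 0) + (-6 * m 0 2) * (hid 2 0) + (-6 * m 0 3) * (hid 3 0)) - (m 1 1 * (m 2 2 * m 3 3 - m 2 3 * m 3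 2) - m 1 2 * (m 2 1 * m 3 3 - m 2 3 * m 3 1) + m 1 3 * (m 2 1 * m 3 2 - m 2 2 * m 3 1)) * (alg_six_inv (R := R))

lemma minor_0_1 (m : Fin 4 → Fin 4 → R)
    (hid : ∀ i j : Fin 4, m i 0 * m 0 j + m i 1 * m 1 j + m i 2 * m 2 j + m i 3 * m 3 j = m i j)
    (htr : m 0 0 + m 1 1 + m 2 2 + m 3 3 = 2) :
    m 1 0 * (m 2 2 * m 3 3 - m 2 3 * m 3 2) - m 1 2 * (m 2 0 * m 3 3 - m 2 3 * m 3 0) + m 1 3 * (m 2 0 * m 3 2 - m 2 2 * m 3 0) = 0 := by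
  linear_combination ((-1) * (algebraMap ℝ R ((6:ℝ)⁻¹))) * (((-3 - 3*(m 0 0 + m 1 1 + m 2 2 + m 3 3 - 2)) * m 1 0) * (htr) + (3 * m 1 0) * (hid 0 0) + (3 * m 1 0) * (hid 1 1) + (3 * m 1 0) * (hid 2 2) + (3 * m 1 0) * (hid 3 3) + (6 + 6*(m 0 0 + m 1 1 + m 2 2 + m 3 3 - 2)) * (hid 1 0) + (-6 * m 1 0) * (hid 0 0) + (-6 * m 1 1) * (hid 1 0) + (-6 * m 1 2) * (hid 2 0) + (-6 * m 1 3) * (hid 3 0)) - (m 1 0 * (m 2 2 * m 3 3 - m 2 3 * m 3 2) - m 1 2 * (m 2 0 * m 3 3 - m 2 3 * m 3 0) + m 1 3 * (m 2 0 * m 3 2 - m 2 2 * m 3 0)) * (alg_six_inv (R := R))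

lemma minor_0_2 (m : Fin 4 → Fin 4 → R)
    (hid : ∀ i j : Fin 4, m i 0 * m 0 j + m i 1 * m 1 j + m i 2 * m 2 j + m i 3 * m 3 j = m i j)
    (htr : m 0 0 + m 1 1 + m 2 2 + m 3 3 = 2) :
    m 1 0 * (m 2 1 * m 3 3 - m 2 3 * m 3 1) - m 1 1 * (m 2 0 * m 3 3 - m 2 3 * m 3 0) + m 1 3 * (m 2 0 * m 3 1 - m 2 1 * m 3 0) = 0 := by
  linear_combination ((algebraMap ℝ R ((6:ℝ)⁻¹))) * (((-3 - 3*(m 0 0 + m 1 1 + m 2 2 + m 3 3 - 2)) * m 2 0) * (htr) + (3 * m 2 0) * (hid 0 0) + (3 * m 2 0) * (hid 1 1) + (3 * m 2 0) * (hid 2 2) + (3 * m 2 0) * (hid 3 3) + (6 + 6*(m 0 0 + m 1 1 + m 2 2 + m 3 3 - 2)) * (hid 2 0) + (-6 * m 2 0) * (hid 0 0) + (-6 * m 2 1) * (hid 1 0) + (-6 * m 2 2) * (hid 2 0) + (-6 * m 2 3) * (hid 3 0)) - (m 1 0 * (m 2 1 * m 3 3 - m 2 3 * m 3 1) - m 1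 1 * (m 2 0 * m 3 3 - m 2 3 * m 3 0) + m 1 3 * (m 2 0 * m 3 1 - m 2 1 * m 3 0)) * (alg_six_inv (R := R))

lemma minor_0_3 (m : Fin 4 → Fin 4 → R)
    (hid : ∀ i j : Fin 4, m i 0 * m 0 j + m i 1 * m 1 j + m i 2 * m 2 j + m i 3 * m 3 j = m i j)
    (htr : m 0 0 + m 1 1 + m 2 2 + m 3 3 = 2) :
    m 1 0 * (m 2 1 * m 3 2 - m 2 2 * m 3 1) - m 1 1 * (m 2 0 * m 3 2 - m 2 2 * m 3 0) + m 1 2 * (m 2 0 * m 3 1 - m 2 1 * m 3 0) = 0 := by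
  linear_combination ((-1) * (algebraMap ℝ R ((6:ℝ)⁻¹))) * (((-3 - 3*(m 0 0 + m 1 1 + m 2 2 + m 3 3 - 2)) * m 3 0) * (htr) + (3 * m 3 0) * (hid 0 0) + (3 * m 3 0) * (hid 1 1) + (3 * m 3 0) * (hid 2 2) + (3 * m 3 0) * (hid 3 3) + (6 + 6*(m 0 0 + m 1 1 + m 2 2 + m 3 3 - 2)) * (hid 3 0) + (-6 * m 3 0) * (hid 0 0) + (-6 * m 3 1) * (hid 1 0) + (-6 * m 3 2) * (hid 2 0) + (-6 * m 3 3) * (hid 3 0)) - (m 1 0 * (m 2 1 * m 3 2 - m 2 2 * m 3 1) - m 1 1 * (m 2 0 * m 3 2 - m 2 2 * m 3 0) + m 1 2 * (m 2 0 * m 3 1 - m 2 1 * m 3 0)) * (alg_six_inv (R := R))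

lemma minor_1_0 (m : Fin 4 → Fin 4 → R)
    (hid : ∀ i j : Fin 4, m i 0 * m 0 j + m i 1 * m 1 j + m i 2 * m 2 j + m i 3 * m 3 j = m i j)
    (htr : m 0 0 + m 1 1 + m 2 2 + m 3 3 = 2) :
    m 0 1 * (m 2 2 * m 3 3 - m 2 3 * m 3 2) - m 0 2 * (m 2 1 * m 3 3 - m 2 3 * m 3 1) + m 0 3 * (m 2 1 * m 3 2 - m 2 2 * m 3 1) = 0 := by
  linear_combination ((-1) * (algebraMap ℝ R ((6:ℝ)⁻¹))) * (((-3 - 3*(m 0 0 + m 1 1 + m 2 2 + m 3 3 - 2)) * m 0 1) * (htr) + (3 * m 0 1) * (hid 0 0) + (3 * m 0 1) * (hid 1 1) + (3 * m 0 1) * (hid 2 2) + (3 * m 0 1) * (hid 3 3) + (6 + 6*(m 0 0 + m 1 1 + m 2 2 + m 3 3 - 2)) * (hid 0 1) + (-6 * m 0 0) * (hid 0 1) + (-6 * m 0 1) * (hid 1 1) + (-6 * m 0 2) * (hid 2 1) + (-6 * m 0 3) * (hid 3 1)) - (m 0 1 * (m 2 2 * m 3 3 - m 2 3 * m 3 2)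 - m 0 2 * (m 2 1 * m 3 3 - m 2 3 * m 3 1) + m 0 3 * (m 2 1 * m 3 2 - m 2 2 * m 3 1)) * (alg_six_inv (R := R))

lemma minor_1_1 (m : Fin 4 → Fin 4 → R)
    (hid : ∀ i j : Fin 4, m i 0 * m 0 j + m i 1 * m 1 j + m i 2 * m 2 j + m i 3 * m 3 j = m i j)
    (htr : m 0 0 + m 1 1 + m 2 2 + m 3 3 = 2) :
    m 0 0 * (m 2 2 * m 3 3 - m 2 3 * m 3 2) - m 0 2 * (m 2 0 * m 3 3 - m 2 3 * m 3 0) + m 0 3 * (m 2 0 * m 3 2 - m 2 2 * m 3 0) = 0 := by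
  linear_combination ((algebraMap ℝ R ((6:ℝ)⁻¹))) * ((2 + 3*(m 0 0 + m 1 1 + m 2 2 + m 3 3 - 2) + (m 0 0 + m 1 1 + m 2 2 + m 3 3 - 2)*(m 0 0 + m 1 1 + m 2 2 + m 3 3 - 2)) * (htr) + (-4 - 3*(m 0 0 + m 1 1 + m 2 2 + m 3 3 - 2)) * (hid 0 0) + (-4 - 3*(m 0 0 + m 1 1 + m 2 2 + m 3 3 - 2)) * (hid 1 1) + (-4 - 3*(m 0 0 + m 1 1 + m 2 2 + m 3 3 - 2)) * (hid 2 2) + (-4 - 3*(m 0 0 + m 1 1 + m 2 2 + m 3 3 - 2)) * (hid 3 3) + (2 * m 0 0) * (hid 0 0) + (2 * m 0 1) * (hid 1 0) + (2 * m 0 2) * (hid 2 0) + (2 * m 0 3) * (hid 3 0) + (2 * m 1 0) * (hid 0 1) + (2 * m 1 1) * (hid 1 1) + (2 * m 1 2) * (hid 2 1) + (2 * m 1 3) * (hid 3 1) + (2 * m 2 0) * (hid 0 2) + (2 * m 2 1) * (hid 1 2) + (2 * m 2 2) * (hid 2 2) + (2 * m 2 3) * (hid 3 2) + (2 * m 3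 0) * (hid 0 3) + (2 * m 3 1) * (hid 1 3) + (2 * m 3 2) * (hid 2 3) + (2 * m 3 3) * (hid 3 3) + ((-3 - 3*(m 0 0 + m 1 1 + m 2 2 + m 3 3 - 2)) * m 1 1) * (htr) + (3 * m 1 1) * (hid 0 0) + (3 * m 1 1) * (hid 1 1) + (3 * m 1 1) * (hid 2 2) + (3 * m 1 1) * (hid 3 3) + (6 + 6*(m 0 0 + m 1 1 + m 2 2 + m 3 3 - 2)) * (hid 1 1) + (-6 * m 1 0) * (hid 0 1) + (-6 * m 1 1) * (hid 1 1) + (-6 * m 1 2) * (hid 2 1) + (-6 * m 1 3) * (hid 3 1)) - (m 0 0 * (m 2 2 * m 3 3 - m 2 3 * m 3 2) - m 0 2 * (m 2 0 * m 3 3 - m 2 3 * m 3 0) + m 0 3 * (m 2 0 * m 3 2 - m 2 2 * m 3 0)) * (alg_six_inv (R := R))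

lemma minor_1_2 (m : Fin 4 → Fin 4 → R)
    (hid : ∀ i j : Fin 4, m i 0 * m 0 j + m i 1 * m 1 j + m i 2 * m 2 j + m i 3 * m 3 j = m i j)
    (htr : m 0 0 + m 1 1 + m 2 2 + m 3 3 = 2) :
    m 0 0 * (m 2 1 * m 3 3 - m 2 3 * m 3 1) - m 0 1 * (m 2 0 * m 3 3 - m 2 3 * m 3 0) + m 0 3 * (m 2 0 * m 3 1 - m 2 1 * m 3 0) = 0 := by
  linear_combination ((-1) * (algebraMap ℝ R ((6:ℝ)⁻¹))) * (((-3 - 3*(m 0 0 + m 1 1 + m 2 2 + m 3 3 - 2)) * m 2 1) * (htr) + (3 * m 2 1) * (hid 0 0) + (3 * m 2 1) * (hid 1 1) + (3 * m 2 1) * (hid 2 2) + (3 * m 2 1) * (hid 3 3) + (6 + 6*(m 0 0 + m 1 1 + m 2 2 + m 3 3 - 2)) * (hid 2 1) + (-6 * m 2 0) * (hid 0 1) + (-6 * m 2 1) * (hid 1 1) + (-6 * m 2 2) * (hid 2 1) + (-6 * m 2 3) * (hid 3 1)) - (m 0 0 * (m 2 1 * m 3 3 - m 2 3 * m 3 1)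 - m 0 1 * (m 2 0 * m 3 3 - m 2 3 * m 3 0) + m 0 3 * (m 2 0 * m 3 1 - m 2 1 * m 3 0)) * (alg_six_inv (R := R))

lemma minor_1_3 (m : Fin 4 → Fin 4 → R)
    (hid : ∀ i j : Fin 4, m i 0 * m 0 j + m i 1 * m 1 j + m i 2 * m 2 j + m i 3 * m 3 j = m i j)
    (htr : m 0 0 + m 1 1 + m 2 2 + m 3 3 = 2) :
    m 0 0 * (m 2 1 * m 3 2 - m 2 2 * m 3 1) - m 0 1 * (m 2 0 * m 3 2 - m 2 2 * m 3 0) + m 0 2 * (m 2 0 * m 3 1 - m 2 1 * m 3 0) = 0 := by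
  linear_combination ((algebraMap ℝ R ((6:ℝ)⁻¹))) * (((-3 - 3*(m 0 0 + m 1 1 + m 2 2 + m 3 3 - 2)) * m 3 1) * (htr) + (3 * m 3 1) * (hid 0 0) + (3 * m 3 1) * (hid 1 1) + (3 * m 3 1) * (hid 2 2) + (3 * m 3 1) * (hid 3 3) + (6 + 6*(m 0 0 + m 1 1 + m 2 2 + m 3 3 - 2)) * (hid 3 1) + (-6 * m 3 0) * (hid 0 1) + (-6 * m 3 1) * (hid 1 1) + (-6 * m 3 2) * (hid 2 1) + (-6 * m 3 3) * (hid 3 1)) - (m 0 0 * (m 2 1 * m 3 2 - m 2 2 * m 3 1) - m 0 1 * (m 2 0 * m 3 2 - m 2 2 * m 3 0) + m 0 2 * (m 2 0 * m 3 1 - m 2 1 * m 3 0)) * (alg_six_inv (R := R))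

lemma minor_2_0 (m : Fin 4 → Fin 4 → R)
    (hid : ∀ i j : Fin 4, m i 0 * m 0 j + m i 1 * m 1 j + m i 2 * m 2 j + m i 3 * m 3 j = m i j)
    (htr : m 0 0 + m 1 1 + m 2 2 + m 3 3 = 2) :
    m 0 1 * (m 1 2 * m 3 3 - m 1 3 * m 3 2) - m 0 2 * (m 1 1 * m 3 3 - m 1 3 * m 3 1) + m 0 3 * (m 1 1 * m 3 2 - m 1 2 * m 3 1) = 0 := by
  linear_combination ((algebraMap ℝ R ((6:ℝ)⁻¹))) * (((-3 - 3*(m 0 0 + m 1 1 + m 2 2 + m 3 3 - 2)) * m 0 2) * (htr) + (3 * m 0 2) * (hid 0 0) + (3 * m 0 2) * (hid 1 1) + (3 * m 0 2) * (hid 2 2) + (3 * m 0 2) * (hid 3 3) + (6 + 6*(m 0 0 + m 1 1 + m 2 2 + m 3 3 - 2)) * (hid 0 2) + (-6 * m 0 0) * (hid 0 2) + (-6 * m 0 1) * (hid 1 2) + (-6 * m 0 2) * (hid 2 2) + (-6 * m 0 3) * (hid 3 2)) - (m 0 1 * (m 1 2 * m 3 3 - m 1 3 * m 3 2) - m 0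 2 * (m 1 1 * m 3 3 - m 1 3 * m 3 1) + m 0 3 * (m 1 1 * m 3 2 - m 1 2 * m 3 1)) * (alg_six_inv (R := R))

lemma minor_2_1 (m : Fin 4 → Fin 4 → R)
    (hid : ∀ i j : Fin 4, m i 0 * m 0 j + m i 1 * m 1 j + m i 2 * m 2 j + m i 3 * m 3 j = m i j)
    (htr : m 0 0 + m 1 1 + m 2 2 + m 3 3 = 2) :
    m 0 0 * (m 1 2 * m 3 3 - m 1 3 * m 3 2) - m 0 2 * (m 1 0 * m 3 3 - m 1 3 * m 3 0) + m 0 3 * (m 1 0 * m 3 2 - m 1 2 * m 3 0) = 0 := by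
  linear_combination ((-1) * (algebraMap ℝ R ((6:ℝ)⁻¹))) * (((-3 - 3*(m 0 0 + m 1 1 + m 2 2 + m 3 3 - 2)) * m 1 2) * (htr) + (3 * m 1 2) * (hid 0 0) + (3 * m 1 2) * (hid 1 1) + (3 * m 1 2) * (hid 2 2) + (3 * m 1 2) * (hid 3 3) + (6 + 6*(m 0 0 + m 1 1 + m 2 2 + m 3 3 - 2)) * (hid 1 2) + (-6 * m 1 0) * (hid 0 2) + (-6 * m 1 1) * (hid 1 2) + (-6 * m 1 2) * (hid 2 2) + (-6 * m 1 3) * (hid 3 2)) - (m 0 0 * (m 1 2 * m 3 3 - m 1 3 * m 3 2) - m 0 2 * (m 1 0 * m 3 3 - m 1 3 * m 3 0) + m 0 3 * (m 1 0 * m 3 2 - m 1 2 * m 3 0)) * (alg_six_inv (R := R))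

lemma minor_2_2 (m : Fin 4 → Fin 4 → R)
    (hid : ∀ i j : Fin 4, m i 0 * m 0 j + m i 1 * m 1 j + m i 2 * m 2 j + m i 3 * m 3 j = m i j)
    (htr : m 0 0 + m 1 1 + m 2 2 + m 3 3 = 2) :
    m 0 0 * (m 1 1 * m 3 3 - m 1 3 * m 3 1) - m 0 1 * (m 1 0 * m 3 3 - m 1 3 * m 3 0) + m 0 3 * (m 1 0 * m 3 1 - m 1 1 * m 3 0) = 0 := by
  linear_combination ((algebraMap ℝ R ((6:ℝ)⁻¹))) * ((2 + 3*(m 0 0 + m 1 1 + m 2 2 + m 3 3 - 2) + (m 0 0 + m 1 1 + m 2 2 + m 3 3 - 2)*(m 0 0 + m 1 1 + m 2 2 + m 3 3 - 2)) * (htr) + (-4 - 3*(m 0 0 + m 1 1 + m 2 2 + m 3 3 - 2)) * (hid 0 0) + (-4 - 3*(m 0 0 + m 1 1 + m 2 2 + m 3 3 - 2)) * (hid 1 1) + (-4 - 3*(m 0 0 + m 1 1 + m 2 2 + m 3 3 - 2)) * (hid 2 2) + (-4 - 3*(m 0 0 + m 1 1 + m 2 2 + m 3 3 - 2)) * (hid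 3 3) + (2 * m 0 0) * (hid 0 0) + (2 * m 0 1) * (hid 1 0) + (2 * m 0 2) * (hid 2 0) + (2 * m 0 3) * (hid 3 0) + (2 * m 1 0) * (hid 0 1) + (2 * m 1 1) * (hid 1 1) + (2 * m 1 2) * (hid 2 1) + (2 * m 1 3) * (hid 3 1) + (2 * m 2 0) * (hid 0 2) + (2 * m 2 1) * (hid 1 2) + (2 * m 2 2) * (hid 2 2) + (2 * m 2 3) * (hid 3 2) + (2 * m 3 0) * (hid 0 3) + (2 * m 3 1) * (hid 1 3) + (2 * m 3 2) * (hid 2 3) + (2 * m 3 3) * (hid 3 3) + ((-3 - 3*(m 0 0 + m 1 1 + m 2 2 + m 3 3 - 2)) * m 2 2) * (htr) + (3 * m 2 2) * (hid 0 0) + (3 * m 2 2) * (hid 1 1) + (3 * m 2 2) * (hid 2 2) + (3 * m 2 2) * (hid 3 3) + (6 + 6*(m 0 0 + m 1 1 + m 2 2 + m 3 3 - 2)) * (hid 2 2) + (-6 * m 2 0) * (hid 0 2) + (-6 * m 2 1) * (hid 1 2) + (-6 * m 2 2) * (hid 2 2) + (-6 * m 2 3) * (hid 3 2)) - (m 0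 0 * (m 1 1 * m 3 3 - m 1 3 * m 3 1) - m 0 1 * (m 1 0 * m 3 3 - m 1 3 * m 3 0) + m 0 3 * (m 1 0 * m 3 1 - m 1 1 * m 3 0)) * (alg_six_inv (R := R))

lemma minor_2_3 (m : Fin 4 → Fin 4 → R)
    (hid : ∀ i j : Fin 4, m i 0 * m 0 j + m i 1 * m 1 j + m i 2 * m 2 j + m i 3 * m 3 j = m i j)
    (htr : m 0 0 + m 1 1 + m 2 2 + m 3 3 = 2) :
    m 0 0 * (m 1 1 * m 3 2 - m 1 2 * m 3 1) - m 0 1 * (m 1 0 * m 3 2 - m 1 2 * m 3 0) + m 0 2 * (m 1 0 * m 3 1 - m 1 1 * m 3 0) = 0 := by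
  linear_combination ((-1) * (algebraMap ℝ R ((6:ℝ)⁻¹))) * (((-3 - 3*(m 0 0 + m 1 1 + m 2 2 + m 3 3 - 2)) * m 3 2) * (htr) + (3 * m 3 2) * (hid 0 0) + (3 * m 3 2) * (hid 1 1) + (3 * m 3 2) * (hid 2 2) + (3 * m 3 2) * (hid 3 3) + (6 + 6*(m 0 0 + m 1 1 + m 2 2 + m 3 3 - 2)) * (hid 3 2) + (-6 * m 3 0) * (hid 0 2) + (-6 * m 3 1) * (hid 1 2) + (-6 * m 3 2) * (hid 2 2) + (-6 * m 3 3) * (hid 3 2)) - (m 0 0 * (m 1 1 * m 3 2 - m 1 2 * m 3 1) - m 0 1 * (m 1 0 * m 3 2 - m 1 2 * m 3 0) + m 0 2 * (m 1 0 * m 3 1 - m 1 1 * m 3 0)) * (alg_six_inv (R := R))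

lemma minor_3_0 (m : Fin 4 → Fin 4 → R)
    (hid : ∀ i j : Fin 4, m i 0 * m 0 j + m i 1 * m 1 j + m i 2 * m 2 j + m i 3 * m 3 j = m i j)
    (htr : m 0 0 + m 1 1 + m 2 2 + m 3 3 = 2) :
    m 0 1 * (m 1 2 * m 2 3 - m 1 3 * m 2 2) - m 0 2 * (m 1 1 * m 2 3 - m 1 3 * m 2 1) + m 0 3 * (m 1 1 * m 2 2 - m 1 2 * m 2 1) = 0 := by
  linear_combination ((-1) * (algebraMap ℝ R ((6:ℝ)⁻¹))) * (((-3 - 3*(m 0 0 + m 1 1 + m 2 2 + m 3 3 - 2)) * m 0 3) * (htr) + (3 * m 0 3) * (hid 0 0) + (3 * m 0 3) * (hid 1 1) + (3 * m 0 3) * (hid 2 2) + (3 * m 0 3) * (hid 3 3) + (6 + 6*(m 0 0 + m 1 1 + m 2 2 + m 3 3 - 2)) * (hid 0 3) + (-6 * m 0 0) * (hid 0 3) + (-6 * m 0 1) * (hid 1 3) + (-6 * m 0 2) * (hid 2 3) + (-6 * m 0 3) * (hid 3 3)) - (m 0 1 * (m 1 2 * m 2 3 - m 1 3 * m 2 2)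 - m 0 2 * (m 1 1 * m 2 3 - m 1 3 * m 2 1) + m 0 3 * (m 1 1 * m 2 2 - m 1 2 * m 2 1)) * (alg_six_inv (R := R))

lemma minor_3_1 (m : Fin 4 → Fin 4 → R)
    (hid : ∀ i j : Fin 4, m i 0 * m 0 j + m i 1 * m 1 j + m i 2 * m 2 j + m i 3 * m 3 j = m i j)
    (htr : m 0 0 + m 1 1 + m 2 2 + m 3 3 = 2) :
    m 0 0 * (m 1 2 * m 2 3 - m 1 3 * m 2 2) - m 0 2 * (m 1 0 * m 2 3 - m 1 3 * m 2 0) + m 0 3 * (m 1 0 * m 2 2 - m 1 2 * m 2 0) = 0 := by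
  linear_combination ((algebraMap ℝ R ((6:ℝ)⁻¹))) * (((-3 - 3*(m 0 0 + m 1 1 + m 2 2 + m 3 3 - 2)) * m 1 3) * (htr) + (3 * m 1 3) * (hid 0 0) + (3 * m 1 3) * (hid 1 1) + (3 * m 1 3) * (hid 2 2) + (3 * m 1 3) * (hid 3 3) + (6 + 6*(m 0 0 + m 1 1 + m 2 2 + m 3 3 - 2)) * (hid 1 3) + (-6 * m 1 0) * (hid 0 3) + (-6 * m 1 1) * (hid 1 3) + (-6 * m 1 2) * (hid 2 3) + (-6 * m 1 3) * (hid 3 3)) - (m 0 0 * (m 1 2 * m 2 3 - m 1 3 * m 2 2) - m 0 2 * (m 1 0 * m 2 3 - m 1 3 * m 2 0) + m 0 3 * (m 1 0 * m 2 2 - m 1 2 * m 2 0)) * (alg_six_inv (R := R))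

lemma minor_3_2 (m : Fin 4 → Fin 4 → R)
    (hid : ∀ i j : Fin 4, m i 0 * m 0 j + m i 1 * m 1 j + m i 2 * m 2 j + m i 3 * m 3 j = m i j)
    (htr : m 0 0 + m 1 1 + m 2 2 + m 3 3 = 2) :
    m 0 0 * (m 1 1 * m 2 3 - m 1 3 * m 2 1) - m 0 1 * (m 1 0 * m 2 3 - m 1 3 * m 2 0) + m 0 3 * (m 1 0 * m 2 1 - m 1 1 * m 2 0) = 0 := by
  linear_combination ((-1) * (algebraMap ℝ R ((6:ℝ)⁻¹))) * (((-3 - 3*(m 0 0 + m 1 1 + m 2 2 + m 3 3 - 2)) * m 2 3) * (htr) + (3 * m 2 3) * (hid 0 0) + (3 * m 2 3) * (hid 1 1) + (3 * m 2 3) * (hid 2 2) + (3 * m 2 3) * (hid 3 3) + (6 + 6*(m 0 0 + m 1 1 + m 2 2 + m 3 3 - 2)) * (hid 2 3) + (-6 * m 2 0) * (hid 0 3) + (-6 * m 2 1) * (hid 1 3) + (-6 * m 2 2) * (hid 2 3) + (-6 * m 2 3) * (hid 3 3)) - (m 0 0 * (m 1 1 * m 2 3 - m 1 3 * m 2 1)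 - m 0 1 * (m 1 0 * m 2 3 - m 1 3 * m 2 0) + m 0 3 * (m 1 0 * m 2 1 - m 1 1 * m 2 0)) * (alg_six_inv (R := R))

lemma minor_3_3 (m : Fin 4 → Fin 4 → R)
    (hid : ∀ i j : Fin 4, m i 0 * m 0 j + m i 1 * m 1 j + m i 2 * m 2 j + m i 3 * m 3 j = m i j)
    (htr : m 0 0 + m 1 1 + m 2 2 + m 3 3 = 2) :
    m 0 0 * (m 1 1 * m 2 2 - m 1 2 * m 2 1) - m 0 1 * (m 1 0 * m 2 2 - m 1 2 * m 2 0) + m 0 2 * (m 1 0 * m 2 1 - m 1 1 * m 2 0) = 0 := by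
  linear_combination ((algebraMap ℝ R ((6:ℝ)⁻¹))) * ((2 + 3*(m 0 0 + m 1 1 + m 2 2 + m 3 3 - 2) + (m 0 0 + m 1 1 + m 2 2 + m 3 3 - 2)*(m 0 0 + m 1 1 + m 2 2 + m 3 3 - 2)) * (htr) + (-4 - 3*(m 0 0 + m 1 1 + m 2 2 + m 3 3 - 2)) * (hid 0 0) + (-4 - 3*(m 0 0 + m 1 1 + m 2 2 + m 3 3 - 2)) * (hid 1 1) + (-4 - 3*(m 0 0 + m 1 1 + m 2 2 + m 3 3 - 2)) * (hid 2 2) + (-4 - 3*(m 0 0 + m 1 1 + m 2 2 + m 3 3 - 2)) * (hid 3 3) + (2 * m 0 0) * (hid 0 0) + (2 * m 0 1) * (hid 1 0) + (2 * m 0 2) * (hid 2 0) + (2 * m 0 3) * (hid 3 0) + (2 * m 1 0) * (hid 0 1) + (2 * m 1 1) * (hid 1 1) + (2 * m 1 2) * (hid 2 1) + (2 * m 1 3) * (hid 3 1) + (2 * m 2 0) * (hid 0 2) + (2 * m 2 1) * (hid 1 2) + (2 * m 2 2) * (hid 2 2) + (2 * m 2 3) * (hid 3 2) + (2 * m 3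 0) * (hid 0 3) + (2 * m 3 1) * (hid 1 3) + (2 * m 3 2) * (hid 2 3) + (2 * m 3 3) * (hid 3 3) + ((-3 - 3*(m 0 0 + m 1 1 + m 2 2 + m 3 3 - 2)) * m 3 3) * (htr) + (3 * m 3 3) * (hid 0 0) + (3 * m 3 3) * (hid 1 1) + (3 * m 3 3) * (hid 2 2) + (3 * m 3 3) * (hid 3 3) + (6 + 6*(m 0 0 + m 1 1 + m 2 2 + m 3 3 - 2)) * (hid 3 3) + (-6 * m 3 0) * (hid 0 3) + (-6 * m 3 1) * (hid 1 3) + (-6 * m 3 2) * (hid 2 3) + (-6 * m 3 3) * (hid 3 3)) - (m 0 0 * (m 1 1 * m 2 2 - m 1 2 * m 2 1) - m 0 1 * (m 1 0 * m 2 2 - m 1 2 * m 2 0) + m 0 2 * (m 1 0 * m 2 1 - m 1 1 * m 2 0)) * (alg_six_inv (R := R))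

end Minors

section Dvan
open Finset
variable {R : Type} [CommRing R] [Algebra ℝ R]

lemma dvan_0 (m : Fin 4 → Fin 4 → R) (x y z X Y Z : Fin 4 → R)
    (hid : ∀ i j : Fin 4, m i 0 * m 0 j + m i 1 * m 1 j + m i 2 * m 2 j + m i 3 * m 3 j = m i j)
    (htr : m 0 0 + m 1 1 + m 2 2 + m 3 3 = 2)
    (hX : ∀ i, X i = ∑ j, m i j * x j)
    (hY : ∀ i, Y i = ∑ j, m i j * y j)
    (hZ : ∀ i, Z i = ∑ j, m i j * z j) :
    X 1 * (Y 2 * Z 3 - Z 2 * Y 3) - Y 1 * (X 2 * Z 3 - Z 2 * X 3) + Z 1 * (X 2 * Y 3 - Y 2 * X 3) = 0 := by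
  simp only [hX, hY, hZ, Fin.sum_univ_four]
  linear_combination (x 1 * (y 2 * z 3 - z 2 * y 3) - y 1 * (x 2 * z 3 - z 2 * x 3) + z 1 * (x 2 * y 3 - y 2 * x 3)) * (minor_0_0 m hid htr) + (x 0 * (y 2 * z 3 - z 2 * y 3) - y 0 * (x 2 * z 3 - z 2 * x 3) + z 0 * (x 2 * y 3 - y 2 * x 3)) * (minor_0_1 m hid htr) + (x 0 * (y 1 * z 3 - z 1 * y 3) - y 0 * (x 1 * z 3 - z 1 * x 3) + z 0 * (x 1 * y 3 - y 1 * x 3)) * (minor_0_2 m hid htr) + (x 0 * (y 1 * z 2 - z 1 * y 2) - y 0 * (x 1 * z 2 - z 1 * x 2) + z 0 * (x 1 * y 2 - y 1 * x 2)) * (minor_0_3 m hid htr)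

lemma dvan_1 (m : Fin 4 → Fin 4 → R) (x y z X Y Z : Fin 4 → R)
    (hid : ∀ i j : Fin 4, m i 0 * m 0 j + m i 1 * m 1 j + m i 2 * m 2 j + m i 3 * m 3 j = m i j)
    (htr : m 0 0 + m 1 1 + m 2 2 + m 3 3 = 2)
    (hX : ∀ i, X i = ∑ j, m i j * x j)
    (hY : ∀ i, Y i = ∑ j, m i j * y j)
    (hZ : ∀ i, Z i = ∑ j, m i j * z j) :
    X 0 * (Y 2 * Z 3 - Z 2 * Y 3) - Y 0 * (X 2 * Z 3 - Z 2 * X 3) + Z 0 * (X 2 * Y 3 - Y 2 * X 3) = 0 := by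
  simp only [hX, hY, hZ, Fin.sum_univ_four]
  linear_combination (x 1 * (y 2 * z 3 - z 2 * y 3) - y 1 * (x 2 * z 3 - z 2 * x 3) + z 1 * (x 2 * y 3 - y 2 * x 3)) * (minor_1_0 m hid htr) + (x 0 * (y 2 * z 3 - z 2 * y 3) - y 0 * (x 2 * z 3 - z 2 * x 3) + z 0 * (x 2 * y 3 - y 2 * x 3)) * (minor_1_1 m hid htr) + (x 0 * (y 1 * z 3 - z 1 * y 3) - y 0 * (x 1 * z 3 - z 1 * x 3) + z 0 * (x 1 * y 3 - y 1 * x 3)) * (minor_1_2 m hid htr) + (x 0 * (y 1 * z 2 - z 1 * y 2) - y 0 * (x 1 * z 2 - z 1 * x 2) + z 0 * (x 1 * y 2 - y 1 * x 2)) * (minor_1_3 m hid htr)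

lemma dvan_2 (m : Fin 4 → Fin 4 → R) (x y z X Y Z : Fin 4 → R)
    (hid : ∀ i j : Fin 4, m i 0 * m 0 j + m i 1 * m 1 j + m i 2 * m 2 j + m i 3 * m 3 j = m i j)
    (htr : m 0 0 + m 1 1 + m 2 2 + m 3 3 = 2)
    (hX : ∀ i, X i = ∑ j, m i j * x j)
    (hY : ∀ i, Y i = ∑ j, m i j * y j)
    (hZ : ∀ i, Z i = ∑ j, m i j * z j) :
    X 0 * (Y 1 * Z 3 - Z 1 * Y 3) - Y 0 * (X 1 * Z 3 - Z 1 * X 3) + Z 0 * (X 1 * Y 3 - Y 1 * X 3) = 0 := by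
  simp only [hX, hY, hZ, Fin.sum_univ_four]
  linear_combination (x 1 * (y 2 * z 3 - z 2 * y 3) - y 1 * (x 2 * z 3 - z 2 * x 3) + z 1 * (x 2 * y 3 - y 2 * x 3)) * (minor_2_0 m hid htr) + (x 0 * (y 2 * z 3 - z 2 * y 3) - y 0 * (x 2 * z 3 - z 2 * x 3) + z 0 * (x 2 * y 3 - y 2 * x 3)) * (minor_2_1 m hid htr) + (x 0 * (y 1 * z 3 - z 1 * y 3) - y 0 * (x 1 * z 3 - z 1 * x 3) + z 0 * (x 1 * y 3 - y 1 * x 3)) * (minor_2_2 m hid htr) + (x 0 * (y 1 * z 2 - z 1 * y 2) - y 0 * (x 1 * z 2 - z 1 * x 2) + z 0 * (x 1 * y 2 - y 1 * x 2)) * (minor_2_3 m hid htr)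

lemma dvan_3 (m : Fin 4 → Fin 4 → R) (x y z X Y Z : Fin 4 → R)
    (hid : ∀ i j : Fin 4, m i 0 * m 0 j + m i 1 * m 1 j + m i 2 * m 2 j + m i 3 * m 3 j = m i j)
    (htr : m 0 0 + m 1 1 + m 2 2 + m 3 3 = 2)
    (hX : ∀ i, X i = ∑ j, m i j * x j)
    (hY : ∀ i, Y i = ∑ j, m i j * y j)
    (hZ : ∀ i, Z i = ∑ j, m i j * z j) :
    X 0 * (Y 1 * Z 2 - Z 1 * Y 2) - Y 0 * (X 1 * Z 2 - Z 1 * X 2) + Z 0 * (X 1 * Y 2 - Y 1 * X 2) = 0 := by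
  simp only [hX, hY, hZ, Fin.sum_univ_four]
  linear_combination (x 1 * (y 2 * z 3 - z 2 * y 3) - y 1 * (x 2 * z 3 - z 2 * x 3) + z 1 * (x 2 * y 3 - y 2 * x 3)) * (minor_3_0 m hid htr) + (x 0 * (y 2 * z 3 - z 2 * y 3) - y 0 * (x 2 * z 3 - z 2 * x 3) + z 0 * (x 2 * y 3 - y 2 * x 3)) * (minor_3_1 m hid htr) + (x 0 * (y 1 * z 3 - z 1 * y 3) - y 0 * (x 1 * z 3 - z 1 * x 3) + z 0 * (x 1 * y 3 - y 1 * x 3)) * (minor_3_2 m hid htr) + (x 0 * (y 1 * z 2 - z 1 * y 2) - y 0 * (x 1 * z 2 - z 1 * x 2) + z 0 * (x 1 * y 2 - y 1 * x 2)) * (minor_3_3 m hid htr)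

end Dvan

section Star
open Finset
variable {Q : RAPM 4} (L : Q.V →ₗ[Q.C] Q.V →ₗ[Q.C] Q.V →ₗ[Q.C] Q.V →ₗ[Q.C] Q.C)
  (π : Q.V →ₗ[Q.C] Q.V)

lemma coordrel (x : Q.V) (i : Fin 4) :
    Q.g (Q.e' i) (π x) = ∑ j, Q.g (Q.e' i) (π (Q.e j)) * Q.g (Q.e' j) x := by
  conv_lhs => rw [Q.frame_span x]
  rw [map_sum, map_sum]
  exact Finset.sum_congr rfl fun j _ => by
    rw [map_smul, map_smul, smul_eq_mul]; ring

set_option maxHeartbeats 2000000 in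
lemma star (hidem : ∀ a, π (π a) = π a)
    (htrm : ∑ i, Q.g (Q.e' i) (π (Q.e i)) = 2)
    (hA : ∀ x y z w, L x y z w = - L y x z w) :
    ∀ u v w c d t, L (π u) (π v) c d * Q.g (π w) t + L (π v) (π w) c d * Q.g (π u) t
      + L (π w) (π u) c d * Q.g (π v) t = 0 := by
  intro u v w c d t
  have hcoord : ∀ (x : Q.V) (i : Fin 4),
      Q.g (Q.e' i) (π x) = ∑ j, Q.g (Q.e' i) (π (Q.e j)) * Q.g (Q.e' j) x :=
    fun x i => coordrel π x i
  have hid : ∀ i j : Fin 4,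
      Q.g (Q.e' i) (π (Q.e 0)) * Q.g (Q.e' 0) (π (Q.e j))
      + Q.g (Q.e' i) (π (Q.e 1)) * Q.g (Q.e' 1) (π (Q.e j))
      + Q.g (Q.e' i) (π (Q.e 2)) * Q.g (Q.e' 2) (π (Q.e j))
      + Q.g (Q.e' i) (π (Q.e 3)) * Q.g (Q.e' 3) (π (Q.e j))
      = Q.g (Q.e' i) (π (Q.e j)) := by
    intro i j
    have h := hcoord (π (Q.e j)) i
    rw [hidem (Q.e j)] at h
    simp only [Fin.sum_univ_four] at h
    linear_combination -h
  have htr4 : Q.g (Q.e' 0) (π (Q.e 0)) + Q.g (Q.e' 1) (π (Q.e 1)) + Q.g (Q.e' 2) (π (Q.e 2))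
      + Q.g (Q.e' 3) (π (Q.e 3)) = 2 := by
    have := htrm; simpa [Fin.sum_univ_four] using this
  have hD0 : Q.g (Q.e' 1) (π u) * (Q.g (Q.e' 2) (π v) * Q.g (Q.e' 3) (π w) - Q.g (Q.e' 2) (π w) * Q.g (Q.e' 3) (π v)) - Q.g (Q.e' 1) (π v) * (Q.g (Q.e' 2) (π u) * Q.g (Q.e' 3) (π w) - Q.g (Q.e' 2) (π w) * Q.g (Q.e' 3) (π u)) + Q.g (Q.e' 1) (π w) * (Q.g (Q.e' 2) (π u) * Q.g (Q.e' 3) (π v) - Q.g (Q.e' 2) (π v) * Q.g (Q.e' 3) (π u)) = 0 :=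
    dvan_0 (fun i j => Q.g (Q.e' i) (π (Q.e j))) (fun j => Q.g (Q.e' j) u)
      (fun j => Q.g (Q.e' j) v) (fun j => Q.g (Q.e' j) w)
      (fun i => Q.g (Q.e' i) (π u)) (fun i => Q.g (Q.e' i) (π v)) (fun i => Q.g (Q.e' i) (π w))
      hid htr4 (fun i => hcoord u i) (fun i => hcoord v i) (fun i => hcoord w i)
  have hD1 : Q.g (Q.e' 0) (π u) * (Q.g (Q.e' 2) (π v) * Q.g (Q.e' 3) (π w) - Q.g (Q.e' 2) (π w) * Q.g (Q.e' 3) (π v)) - Q.g (Q.e' 0) (π v) * (Q.g (Q.e' 2) (π u) * Q.g (Q.e' 3) (π w) - Q.g (Q.e' 2) (π w) * Q.g (Q.e' 3) (π u)) + Q.g (Q.e' 0) (π w) * (Q.g (Q.e' 2) (π u) * Q.g (Q.e' 3) (π v) - Q.g (Q.e' 2) (π v) * Q.g (Q.e' 3) (π u)) = 0 :=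
    dvan_1 (fun i j => Q.g (Q.e' i) (π (Q.e j))) (fun j => Q.g (Q.e' j) u)
      (fun j => Q.g (Q.e' j) v) (fun j => Q.g (Q.e' j) w)
      (fun i => Q.g (Q.e' i) (π u)) (fun i => Q.g (Q.e' i) (π v)) (fun i => Q.g (Q.e' i) (π w))
      hid htr4 (fun i => hcoord u i) (fun i => hcoord v i) (fun i => hcoord w i)
  have hD2 : Q.g (Q.e' 0) (π u) * (Q.g (Q.e' 1) (π v) * Q.g (Q.e' 3) (π w) - Q.g (Q.e' 1) (π w) * Q.g (Q.e' 3) (π v)) - Q.g (Q.e' 0) (π v) * (Q.g (Q.e' 1) (π u) * Q.g (Q.e' 3) (π w) - Q.g (Q.e' 1) (π w) * Q.g (Q.e' 3) (π u)) + Q.g (Q.e' 0) (π w) * (Q.g (Q.e' 1) (π u) * Q.g (Q.e' 3) (π v) - Q.g (Q.e' 1) (π v) * Q.g (Q.e' 3) (π u)) = 0 :=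
    dvan_2 (fun i j => Q.g (Q.e' i) (π (Q.e j))) (fun j => Q.g (Q.e' j) u)
      (fun j => Q.g (Q.e' j) v) (fun j => Q.g (Q.e' j) w)
      (fun i => Q.g (Q.e' i) (π u)) (fun i => Q.g (Q.e' i) (π v)) (fun i => Q.g (Q.e' i) (π w))
      hid htr4 (fun i => hcoord u i) (fun i => hcoord v i) (fun i => hcoord w i)
  have hD3 : Q.g (Q.e' 0) (π u) * (Q.g (Q.e' 1) (π v) * Q.g (Q.e' 2) (π w) - Q.g (Q.e' 1) (π w) * Q.g (Q.e' 2) (π v)) - Q.g (Q.e' 0) (π v) * (Q.g (Q.e' 1) (π u) * Q.g (Q.e' 2) (π w) - Q.g (Q.e' 1) (π w) * Q.g (Q.e' 2) (π u)) + Q.g (Q.e' 0) (π w) * (Q.g (Q.e' 1) (π u) * Q.g (Q.e' 2) (π v) - Q.g (Q.e' 1) (π v) * Q.g (Q.e' 2) (π u)) = 0 :=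
    dvan_3 (fun i j => Q.g (Q.e' i) (π (Q.e j))) (fun j => Q.g (Q.e' j) u)
      (fun j => Q.g (Q.e' j) v) (fun j => Q.g (Q.e' j) w)
      (fun i => Q.g (Q.e' i) (π u)) (fun i => Q.g (Q.e' i) (π v)) (fun i => Q.g (Q.e' i) (π w))
      hid htr4 (fun i => hcoord u i) (fun i => hcoord v i) (fun i => hcoord w i)
  rw [Q.frame_span (π u), Q.frame_span (π v), Q.frame_span (π w)]
  simp only [map_sum, map_smul, LinearMap.sum_apply, LinearMap.smul_apply, smul_eq_mul,
    Finset.sum_mul, Finset.mul_sum]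
  simp only [Fin.sum_univ_four]
  linear_combination (L (Q.e 1) (Q.e 2) c d * Q.g (Q.e 3) t + L (Q.e 2) (Q.e 3) c d * Q.g (Q.e 1) t + L (Q.e 3) (Q.e 1) c d * Q.g (Q.e 2) t) * hD0
    + (L (Q.e 0) (Q.e 2) c d * Q.g (Q.e 3) t + L (Q.e 2) (Q.e 3) c d * Q.g (Q.e 0) t + L (Q.e 3) (Q.e 0) c d * Q.g (Q.e 2) t) * hD1
    + (L (Q.e 0) (Q.e 1) c d * Q.g (Q.e 3) t + L (Q.e 1) (Q.e 3) c d * Q.g (Q.e 0) t + L (Q.e 3) (Q.e 0) c d * Q.g (Q.e 1) t) * hD2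
    + (L (Q.e 0) (Q.e 1) c d * Q.g (Q.e 2) t + L (Q.e 1) (Q.e 2) c d * Q.g (Q.e 0) t + L (Q.e 2) (Q.e 0) c d * Q.g (Q.e 1) t) * hD3
    + ((1) * (Q.g (Q.e 0) t) * (Q.g (Q.e' 0) (π u)) * (Q.g (Q.e' 0) (π v)) * (Q.g (Q.e' 1) (π w)) + (1) * (Q.g (Q.e 0) t) * (Q.g (Q.e' 0) (π u)) * (Q.g (Q.e' 1) (π v)) * (Q.g (Q.e' 0) (π w)) + (1) * (Q.g (Q.e 0) t) * (Q.g (Q.e' 1) (π u)) * (Q.g (Q.e' 0) (π v)) * (Q.g (Q.e' 0) (π w)) + (1) * (Q.g (Q.e 1) t) * (Q.g (Q.e' 0) (π u)) * (Q.g (Q.e' 1) (π v)) * (Q.g (Q.e' 1) (π w)) + (1) * (Q.g (Q.e 1) t) * (Q.g (Q.e' 1) (π u)) * (Q.g (Q.e' 0) (π v)) * (Q.g (Q.e' 1) (π w)) + (1) * (Q.g (Q.e 1) t) * (Q.g (Q.e' 1) (π u)) * (Q.g (Q.e' 1) (π v)) * (Q.g (Q.e' 0) (π w)) + (1) * (Q.g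 (Q.e 2) t) * (Q.g (Q.e' 0) (π u)) * (Q.g (Q.e' 2) (π v)) * (Q.g (Q.e' 1) (π w)) + (1) * (Q.g (Q.e 2) t) * (Q.g (Q.e' 1) (π u)) * (Q.g (Q.e' 0) (π v)) * (Q.g (Q.e' 2) (π w)) + (1) * (Q.g (Q.e 2) t) * (Q.g (Q.e' 2) (π u)) * (Q.g (Q.e' 1) (π v)) * (Q.g (Q.e' 0) (π w)) + (1) * (Q.g (Q.e 3) t) * (Q.g (Q.e' 0) (π u)) * (Q.g (Q.e' 3) (π v)) * (Q.g (Q.e' 1) (π w)) + (1) * (Q.g (Q.e 3) t) * (Q.g (Q.e' 1) (π u)) * (Q.g (Q.e' 0) (π v)) * (Q.g (Q.e' 3) (π w)) + (1) * (Q.g (Q.e 3) t) * (Q.g (Q.e' 3) (π u)) * (Q.g (Q.e' 1) (π v)) * (Q.g (Q.e' 0) (π w))) * (hA (Q.e 0) (Q.e 1) c d)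
    + ((1) * (Q.g (Q.e 0) t) * (Q.g (Q.e' 0) (π u)) * (Q.g (Q.e' 0) (π v)) * (Q.g (Q.e' 2) (π w)) + (1) * (Q.g (Q.e 0) t) * (Q.g (Q.e' 0) (π u)) * (Q.g (Q.e' 2) (π v)) * (Q.g (Q.e' 0) (π w)) + (1) * (Q.g (Q.e 0) t) * (Q.g (Q.e' 2) (π u)) * (Q.g (Q.e' 0) (π v)) * (Q.g (Q.e' 0) (π w)) + (1) * (Q.g (Q.e 1) t) * (Q.g (Q.e' 0) (π u)) * (Q.g (Q.e' 2) (π v)) * (Q.g (Q.e' 1) (π w)) + (1) * (Q.g (Q.e 1) t) * (Q.g (Q.e' 1) (π u)) * (Q.g (Q.e' 0) (π v)) * (Q.g (Q.e' 2) (π w)) + (1) * (Q.g (Q.e 1) t) * (Q.g (Q.e' 2) (π u)) * (Q.g (Q.e' 1) (π v)) * (Q.g (Q.e' 0) (π w)) + (1) * (Q.g (Q.e 2) t) * (Q.g (Q.e' 0) (π u)) * (Q.g (Q.e' 2) (π v)) * (Q.g (Q.e' 2) (π w)) + (1) * (Q.g (Q.e 2) t) * (Q.g (Q.e' 2) (π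 u)) * (Q.g (Q.e' 0) (π v)) * (Q.g (Q.e' 2) (π w)) + (1) * (Q.g (Q.e 2) t) * (Q.g (Q.e' 2) (π u)) * (Q.g (Q.e' 2) (π v)) * (Q.g (Q.e' 0) (π w)) + (1) * (Q.g (Q.e 3) t) * (Q.g (Q.e' 0) (π u)) * (Q.g (Q.e' 3) (π v)) * (Q.g (Q.e' 2) (π w)) + (1) * (Q.g (Q.e 3) t) * (Q.g (Q.e' 2) (π u)) * (Q.g (Q.e' 0) (π v)) * (Q.g (Q.e' 3) (π w)) + (1) * (Q.g (Q.e 3) t) * (Q.g (Q.e' 3) (π u)) * (Q.g (Q.e' 2) (π v)) * (Q.g (Q.e' 0) (π w))) * (hA (Q.e 0) (Q.e 2) c d)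
    + ((1) * (Q.g (Q.e 0) t) * (Q.g (Q.e' 0) (π u)) * (Q.g (Q.e' 0) (π v)) * (Q.g (Q.e' 3) (π w)) + (1) * (Q.g (Q.e 0) t) * (Q.g (Q.e' 0) (π u)) * (Q.g (Q.e' 3) (π v)) * (Q.g (Q.e' 0) (π w)) + (1) * (Q.g (Q.e 0) t) * (Q.g (Q.e' 3) (π u)) * (Q.g (Q.e' 0) (π v)) * (Q.g (Q.e' 0) (π w)) + (1) * (Q.g (Q.e 1) t) * (Q.g (Q.e' 0) (π u)) * (Q.g (Q.e' 3) (π v)) * (Q.g (Q.e' 1) (π w)) + (1) * (Q.g (Q.e 1) t) * (Q.g (Q.e' 1) (π u)) * (Q.g (Q.e' 0) (π v)) * (Q.g (Q.e' 3) (π w)) + (1) * (Q.g (Q.e 1) t) * (Q.g (Q.e' 3) (π u)) * (Q.g (Q.e' 1) (π v)) * (Q.g (Q.e' 0) (π w)) + (1) * (Q.g (Q.e 2) t) * (Q.g (Q.e' 0) (π u)) * (Q.g (Q.e' 3) (π v)) * (Q.g (Q.e' 2) (π w)) + (1) * (Q.g (Q.e 2) t) * (Q.g (Q.e' 2) (π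 u)) * (Q.g (Q.e' 0) (π v)) * (Q.g (Q.e' 3) (π w)) + (1) * (Q.g (Q.e 2) t) * (Q.g (Q.e' 3) (π u)) * (Q.g (Q.e' 2) (π v)) * (Q.g (Q.e' 0) (π w)) + (1) * (Q.g (Q.e 3) t) * (Q.g (Q.e' 0) (π u)) * (Q.g (Q.e' 3) (π v)) * (Q.g (Q.e' 3) (π w)) + (1) * (Q.g (Q.e 3) t) * (Q.g (Q.e' 3) (π u)) * (Q.g (Q.e' 0) (π v)) * (Q.g (Q.e' 3) (π w)) + (1) * (Q.g (Q.e 3) t) * (Q.g (Q.e' 3) (π u)) * (Q.g (Q.e' 3) (π v)) * (Q.g (Q.e' 0) (π w))) * (hA (Q.e 0) (Q.e 3) c d)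
    + ((1) * (Q.g (Q.e 0) t) * (Q.g (Q.e' 0) (π u)) * (Q.g (Q.e' 2) (π v)) * (Q.g (Q.e' 1) (π w)) + (1) * (Q.g (Q.e 0) t) * (Q.g (Q.e' 1) (π u)) * (Q.g (Q.e' 0) (π v)) * (Q.g (Q.e' 2) (π w)) + (1) * (Q.g (Q.e 0) t) * (Q.g (Q.e' 2) (π u)) * (Q.g (Q.e' 1) (π v)) * (Q.g (Q.e' 0) (π w)) + (1) * (Q.g (Q.e 1) t) * (Q.g (Q.e' 1) (π u)) * (Q.g (Q.e' 1) (π v)) * (Q.g (Q.e' 2) (π w)) + (1) * (Q.g (Q.e 1) t) * (Q.g (Q.e' 1) (π u)) * (Q.g (Q.e' 2) (π v)) * (Q.g (Q.e' 1) (π w)) + (1) * (Q.g (Q.e 1) t) * (Q.g (Q.e' 2) (π u)) * (Q.g (Q.e' 1) (π v)) * (Q.g (Q.e' 1) (π w)) + (1) * (Q.g (Q.e 2) t) * (Q.g (Q.e' 1) (π u)) * (Q.g (Q.e' 2) (π v)) * (Q.g (Q.e' 2) (π w)) + (1) * (Q.g (Q.e 2) t) * (Q.g (Q.e' 2) (π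 u)) * (Q.g (Q.e' 1) (π v)) * (Q.g (Q.e' 2) (π w)) + (1) * (Q.g (Q.e 2) t) * (Q.g (Q.e' 2) (π u)) * (Q.g (Q.e' 2) (π v)) * (Q.g (Q.e' 1) (π w)) + (1) * (Q.g (Q.e 3) t) * (Q.g (Q.e' 1) (π u)) * (Q.g (Q.e' 3) (π v)) * (Q.g (Q.e' 2) (π w)) + (1) * (Q.g (Q.e 3) t) * (Q.g (Q.e' 2) (π u)) * (Q.g (Q.e' 1) (π v)) * (Q.g (Q.e' 3) (π w)) + (1) * (Q.g (Q.e 3) t) * (Q.g (Q.e' 3) (π u)) * (Q.g (Q.e' 2) (π v)) * (Q.g (Q.e' 1) (π w))) * (hA (Q.e 1) (Q.e 2) c d)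
    + ((1) * (Q.g (Q.e 0) t) * (Q.g (Q.e' 0) (π u)) * (Q.g (Q.e' 3) (π v)) * (Q.g (Q.e' 1) (π w)) + (1) * (Q.g (Q.e 0) t) * (Q.g (Q.e' 1) (π u)) * (Q.g (Q.e' 0) (π v)) * (Q.g (Q.e' 3) (π w)) + (1) * (Q.g (Q.e 0) t) * (Q.g (Q.e' 3) (π u)) * (Q.g (Q.e' 1) (π v)) * (Q.g (Q.e' 0) (π w)) + (1) * (Q.g (Q.e 1) t) * (Q.g (Q.e' 1) (π u)) * (Q.g (Q.e' 1) (π v)) * (Q.g (Q.e' 3) (π w)) + (1) * (Q.g (Q.e 1) t) * (Q.g (Q.e' 1) (π u)) * (Q.g (Q.e' 3) (π v)) * (Q.g (Q.e' 1) (π w)) + (1) * (Q.g (Q.e 1) t) * (Q.g (Q.e' 3) (π u)) * (Q.g (Q.e' 1) (π v)) * (Q.g (Q.e' 1) (π w)) + (1) * (Q.g (Q.e 2) t) * (Q.g (Q.e' 1) (π u)) * (Q.g (Q.e' 3) (π v)) * (Q.g (Q.e' 2) (π w)) + (1) * (Q.g (Q.e 2) t) * (Q.g (Q.e' 2) (π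 u)) * (Q.g (Q.e' 1) (π v)) * (Q.g (Q.e' 3) (π w)) + (1) * (Q.g (Q.e 2) t) * (Q.g (Q.e' 3) (π u)) * (Q.g (Q.e' 2) (π v)) * (Q.g (Q.e' 1) (π w)) + (1) * (Q.g (Q.e 3) t) * (Q.g (Q.e' 1) (π u)) * (Q.g (Q.e' 3) (π v)) * (Q.g (Q.e' 3) (π w)) + (1) * (Q.g (Q.e 3) t) * (Q.g (Q.e' 3) (π u)) * (Q.g (Q.e' 1) (π v)) * (Q.g (Q.e' 3) (π w)) + (1) * (Q.g (Q.e 3) t) * (Q.g (Q.e' 3) (π u)) * (Q.g (Q.e' 3) (π v)) * (Q.g (Q.e' 1) (π w))) * (hA (Q.e 1) (Q.e 3) c d)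
    + ((1) * (Q.g (Q.e 0) t) * (Q.g (Q.e' 0) (π u)) * (Q.g (Q.e' 3) (π v)) * (Q.g (Q.e' 2) (π w)) + (1) * (Q.g (Q.e 0) t) * (Q.g (Q.e' 2) (π u)) * (Q.g (Q.e' 0) (π v)) * (Q.g (Q.e' 3) (π w)) + (1) * (Q.g (Q.e 0) t) * (Q.g (Q.e' 3) (π u)) * (Q.g (Q.e' 2) (π v)) * (Q.g (Q.e' 0) (π w)) + (1) * (Q.g (Q.e 1) t) * (Q.g (Q.e' 1) (π u)) * (Q.g (Q.e' 3) (π v)) * (Q.g (Q.e' 2) (π w)) + (1) * (Q.g (Q.e 1) t) * (Q.g (Q.e' 2) (π u)) * (Q.g (Q.e' 1) (π v)) * (Q.g (Q.e' 3) (π w)) + (1) * (Q.g (Q.e 1) t) * (Q.g (Q.e' 3) (π u)) * (Q.g (Q.e' 2) (π v)) * (Q.g (Q.e' 1) (π w)) + (1) * (Q.g (Q.e 2) t) * (Q.g (Q.e' 2) (π u)) * (Q.g (Q.e' 2) (π v)) * (Q.g (Q.e' 3) (π w)) + (1) * (Q.g (Q.e 2) t) * (Q.g (Q.e' 2) (π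 u)) * (Q.g (Q.e' 3) (π v)) * (Q.g (Q.e' 2) (π w)) + (1) * (Q.g (Q.e 2) t) * (Q.g (Q.e' 3) (π u)) * (Q.g (Q.e' 2) (π v)) * (Q.g (Q.e' 2) (π w)) + (1) * (Q.g (Q.e 3) t) * (Q.g (Q.e' 2) (π u)) * (Q.g (Q.e' 3) (π v)) * (Q.g (Q.e' 3) (π w)) + (1) * (Q.g (Q.e 3) t) * (Q.g (Q.e' 3) (π u)) * (Q.g (Q.e' 2) (π v)) * (Q.g (Q.e' 3) (π w)) + (1) * (Q.g (Q.e 3) t) * (Q.g (Q.e' 3) (π u)) * (Q.g (Q.e' 3) (π v)) * (Q.g (Q.e' 2) (π w))) * (hA (Q.e 2) (Q.e 3) c d)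
    + (hf Q) * ((3) * (Q.g (Q.e 0) t) * (Q.g (Q.e' 0) (π u)) * (Q.g (Q.e' 0) (π v)) * (Q.g (Q.e' 0) (π w)) + (1) * (Q.g (Q.e 1) t) * (Q.g (Q.e' 0) (π u)) * (Q.g (Q.e' 0) (π v)) * (Q.g (Q.e' 1) (π w)) + (1) * (Q.g (Q.e 1) t) * (Q.g (Q.e' 0) (π u)) * (Q.g (Q.e' 1) (π v)) * (Q.g (Q.e' 0) (π w)) + (1) * (Q.g (Q.e 1) t) * (Q.g (Q.e' 1) (π u)) * (Q.g (Q.e' 0) (π v)) * (Q.g (Q.e' 0) (π w)) + (1) * (Q.g (Q.e 2) t) * (Q.g (Q.e' 0) (π u)) * (Q.g (Q.e' 0) (π v)) * (Q.g (Q.e' 2) (π w)) + (1) * (Q.g (Q.e 2) t) * (Q.g (Q.e' 0) (π u)) * (Q.g (Q.e' 2) (π v)) * (Q.g (Q.e' 0) (π w)) + (1) * (Q.g (Q.e 2) t) * (Q.g (Q.e' 2) (π u)) * (Q.g (Q.e' 0) (π v)) * (Q.g (Q.e' 0) (π w)) + (1) * (Q.g (Q.e 3) t) * (Q.g (Q.e'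 0) (π u)) * (Q.g (Q.e' 0) (π v)) * (Q.g (Q.e' 3) (π w)) + (1) * (Q.g (Q.e 3) t) * (Q.g (Q.e' 0) (π u)) * (Q.g (Q.e' 3) (π v)) * (Q.g (Q.e' 0) (π w)) + (1) * (Q.g (Q.e 3) t) * (Q.g (Q.e' 3) (π u)) * (Q.g (Q.e' 0) (π v)) * (Q.g (Q.e' 0) (π w))) * (hA (Q.e 0) (Q.e 0) c d)
    + (-1) * ((3) * (Q.g (Q.e 0) t) * (Q.g (Q.e' 0) (π u)) * (Q.g (Q.e' 0) (π v)) * (Q.g (Q.e' 0) (π w)) + (1) * (Q.g (Q.e 1) t) * (Q.g (Q.e' 0) (π u)) * (Q.g (Q.e' 0) (π v)) * (Q.g (Q.e' 1) (π w)) + (1) * (Q.g (Q.e 1) t) * (Q.g (Q.e' 0) (π u)) * (Q.g (Q.e' 1) (π v)) * (Q.g (Q.e' 0) (π w)) + (1) * (Q.g (Q.e 1) t) * (Q.g (Q.e' 1) (π u)) * (Q.g (Q.e' 0) (π v)) * (Q.g (Q.e' 0) (π w)) + (1) * (Q.g (Q.e 2) t) * (Q.g (Q.e' 0) (π u)) *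 (Q.g (Q.e' 0) (π v)) * (Q.g (Q.e' 2) (π w)) + (1) * (Q.g (Q.e 2) t) * (Q.g (Q.e' 0) (π u)) * (Q.g (Q.e' 2) (π v)) * (Q.g (Q.e' 0) (π w)) + (1) * (Q.g (Q.e 2) t) * (Q.g (Q.e' 2) (π u)) * (Q.g (Q.e' 0) (π v)) * (Q.g (Q.e' 0) (π w)) + (1) * (Q.g (Q.e 3) t) * (Q.g (Q.e' 0) (π u)) * (Q.g (Q.e' 0) (π v)) * (Q.g (Q.e' 3) (π w)) + (1) * (Q.g (Q.e 3) t) * (Q.g (Q.e' 0) (π u)) * (Q.g (Q.e' 3) (π v)) * (Q.g (Q.e' 0) (π w)) + (1) * (Q.g (Q.e 3) t) * (Q.g (Q.e' 3) (π u)) * (Q.g (Q.e' 0) (π v)) * (Q.g (Q.e' 0) (π w))) * (L (Q.e 0) (Q.e 0) c d) * (hf_two (Q := Q))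
    + (hf Q) * ((1) * (Q.g (Q.e 0) t) * (Q.g (Q.e' 0) (π u)) * (Q.g (Q.e' 1) (π v)) * (Q.g (Q.e' 1) (π w)) + (1) * (Q.g (Q.e 0) t) * (Q.g (Q.e' 1) (π u)) * (Q.g (Q.e' 0) (π v)) * (Q.g (Q.e' 1) (π w)) + (1) * (Q.g (Q.e 0) t) * (Q.g (Q.e' 1) (π u)) * (Q.g (Q.e' 1) (π v)) * (Q.g (Q.e' 0) (π w)) + (3) * (Q.g (Q.e 1) t) * (Q.g (Q.e' 1) (π u)) * (Q.g (Q.e' 1) (π v)) * (Q.g (Q.e' 1) (π w)) + (1) * (Q.g (Q.e 2) t) * (Q.g (Q.e' 1) (π u)) * (Q.g (Q.e' 1) (π v)) * (Q.g (Q.e' 2) (π w)) + (1) * (Q.g (Q.e 2) t) * (Q.g (Q.e' 1) (π u)) * (Q.g (Q.e' 2) (π v)) * (Q.g (Q.e' 1) (π w)) + (1) * (Q.g (Q.e 2) t) * (Q.g (Q.e' 2) (π u)) * (Q.g (Q.e' 1) (π v)) * (Q.g (Q.e' 1) (π w)) + (1) * (Q.g (Q.e 3) t) * (Q.g (Q.e'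 1) (π u)) * (Q.g (Q.e' 1) (π v)) * (Q.g (Q.e' 3) (π w)) + (1) * (Q.g (Q.e 3) t) * (Q.g (Q.e' 1) (π u)) * (Q.g (Q.e' 3) (π v)) * (Q.g (Q.e' 1) (π w)) + (1) * (Q.g (Q.e 3) t) * (Q.g (Q.e' 3) (π u)) * (Q.g (Q.e' 1) (π v)) * (Q.g (Q.e' 1) (π w))) * (hA (Q.e 1) (Q.e 1) c d)
    + (-1) * ((1) * (Q.g (Q.e 0) t) * (Q.g (Q.e' 0) (π u)) * (Q.g (Q.e' 1) (π v)) * (Q.g (Q.e' 1) (π w)) + (1) * (Q.g (Q.e 0) t) * (Q.g (Q.e' 1) (π u)) * (Q.g (Q.e' 0) (π v)) * (Q.g (Q.e' 1) (π w)) + (1) * (Q.g (Q.e 0) t) * (Q.g (Q.e' 1) (π u)) * (Q.g (Q.e' 1) (π v)) * (Q.g (Q.e' 0) (π w)) + (3) * (Q.g (Q.e 1) t) * (Q.g (Q.e' 1) (π u)) * (Q.g (Q.e' 1) (π v)) * (Q.g (Q.e' 1) (π w)) + (1) * (Q.g (Q.e 2) t) * (Q.g (Q.e' 1) (π u)) *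 (Q.g (Q.e' 1) (π v)) * (Q.g (Q.e' 2) (π w)) + (1) * (Q.g (Q.e 2) t) * (Q.g (Q.e' 1) (π u)) * (Q.g (Q.e' 2) (π v)) * (Q.g (Q.e' 1) (π w)) + (1) * (Q.g (Q.e 2) t) * (Q.g (Q.e' 2) (π u)) * (Q.g (Q.e' 1) (π v)) * (Q.g (Q.e' 1) (π w)) + (1) * (Q.g (Q.e 3) t) * (Q.g (Q.e' 1) (π u)) * (Q.g (Q.e' 1) (π v)) * (Q.g (Q.e' 3) (π w)) + (1) * (Q.g (Q.e 3) t) * (Q.g (Q.e' 1) (π u)) * (Q.g (Q.e' 3) (π v)) * (Q.g (Q.e' 1) (π w)) + (1) * (Q.g (Q.e 3) t) * (Q.g (Q.e' 3) (π u)) * (Q.g (Q.e' 1) (π v)) * (Q.g (Q.e' 1) (π w))) * (L (Q.e 1) (Q.e 1) c d) * (hf_two (Q := Q))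
    + (hf Q) * ((1) * (Q.g (Q.e 0) t) * (Q.g (Q.e' 0) (π u)) * (Q.g (Q.e' 2) (π v)) * (Q.g (Q.e' 2) (π w)) + (1) * (Q.g (Q.e 0) t) * (Q.g (Q.e' 2) (π u)) * (Q.g (Q.e' 0) (π v)) * (Q.g (Q.e' 2) (π w)) + (1) * (Q.g (Q.e 0) t) * (Q.g (Q.e' 2) (π u)) * (Q.g (Q.e' 2) (π v)) * (Q.g (Q.e' 0) (π w)) + (1) * (Q.g (Q.e 1) t) * (Q.g (Q.e' 1) (π u)) * (Q.g (Q.e' 2) (π v)) * (Q.g (Q.e' 2) (π w)) + (1) * (Q.g (Q.e 1) t) * (Q.g (Q.e' 2) (π u)) * (Q.g (Q.e' 1) (π v)) * (Q.g (Q.e' 2) (π w)) + (1) * (Q.g (Q.e 1) t) * (Q.g (Q.e' 2) (π u)) * (Q.g (Q.e' 2) (π v)) * (Q.g (Q.e' 1) (π w)) + (3) * (Q.g (Q.e 2) t) * (Q.g (Q.e' 2) (π u)) * (Q.g (Q.e' 2) (π v)) * (Q.g (Q.e' 2) (π w)) + (1) * (Q.g (Q.e 3) t) * (Q.g (Q.e'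 2) (π u)) * (Q.g (Q.e' 2) (π v)) * (Q.g (Q.e' 3) (π w)) + (1) * (Q.g (Q.e 3) t) * (Q.g (Q.e' 2) (π u)) * (Q.g (Q.e' 3) (π v)) * (Q.g (Q.e' 2) (π w)) + (1) * (Q.g (Q.e 3) t) * (Q.g (Q.e' 3) (π u)) * (Q.g (Q.e' 2) (π v)) * (Q.g (Q.e' 2) (π w))) * (hA (Q.e 2) (Q.e 2) c d)
    + (-1) * ((1) * (Q.g (Q.e 0) t) * (Q.g (Q.e' 0) (π u)) * (Q.g (Q.e' 2) (π v)) * (Q.g (Q.e' 2) (π w)) + (1) * (Q.g (Q.e 0) t) * (Q.g (Q.e' 2) (π u)) * (Q.g (Q.e' 0) (π v)) * (Q.g (Q.e' 2) (π w)) + (1) * (Q.g (Q.e 0) t) * (Q.g (Q.e' 2) (π u)) * (Q.g (Q.e' 2) (π v)) * (Q.g (Q.e' 0) (π w)) + (1) * (Q.g (Q.e 1) t) * (Q.g (Q.e' 1) (π u)) * (Q.g (Q.e' 2) (π v)) * (Q.g (Q.e' 2) (π w)) + (1) * (Q.g (Q.e 1) t) * (Q.g (Q.e' 2) (π u)) *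 (Q.g (Q.e' 1) (π v)) * (Q.g (Q.e' 2) (π w)) + (1) * (Q.g (Q.e 1) t) * (Q.g (Q.e' 2) (π u)) * (Q.g (Q.e' 2) (π v)) * (Q.g (Q.e' 1) (π w)) + (3) * (Q.g (Q.e 2) t) * (Q.g (Q.e' 2) (π u)) * (Q.g (Q.e' 2) (π v)) * (Q.g (Q.e' 2) (π w)) + (1) * (Q.g (Q.e 3) t) * (Q.g (Q.e' 2) (π u)) * (Q.g (Q.e' 2) (π v)) * (Q.g (Q.e' 3) (π w)) + (1) * (Q.g (Q.e 3) t) * (Q.g (Q.e' 2) (π u)) * (Q.g (Q.e' 3) (π v)) * (Q.g (Q.e' 2) (π w)) + (1) * (Q.g (Q.e 3) t) * (Q.g (Q.e' 3) (π u)) * (Q.g (Q.e' 2) (π v)) * (Q.g (Q.e' 2) (π w))) * (L (Q.e 2) (Q.e 2) c d) * (hf_two (Q := Q))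
    + (hf Q) * ((1) * (Q.g (Q.e 0) t) * (Q.g (Q.e' 0) (π u)) * (Q.g (Q.e' 3) (π v)) * (Q.g (Q.e' 3) (π w)) + (1) * (Q.g (Q.e 0) t) * (Q.g (Q.e' 3) (π u)) * (Q.g (Q.e' 0) (π v)) * (Q.g (Q.e' 3) (π w)) + (1) * (Q.g (Q.e 0) t) * (Q.g (Q.e' 3) (π u)) * (Q.g (Q.e' 3) (π v)) * (Q.g (Q.e' 0) (π w)) + (1) * (Q.g (Q.e 1) t) * (Q.g (Q.e' 1) (π u)) * (Q.g (Q.e' 3) (π v)) * (Q.g (Q.e' 3) (π w)) + (1) * (Q.g (Q.e 1) t) * (Q.g (Q.e' 3) (π u)) * (Q.g (Q.e' 1) (π v)) * (Q.g (Q.e' 3) (π w)) + (1) * (Q.g (Q.e 1) t) * (Q.g (Q.e' 3) (π u)) * (Q.g (Q.e' 3) (π v)) * (Q.g (Q.e' 1) (π w)) + (1) * (Q.g (Q.e 2) t) * (Q.g (Q.e' 2) (π u)) * (Q.g (Q.e' 3) (π v)) * (Q.g (Q.e' 3) (π w)) + (1) * (Q.g (Q.e 2) t) * (Q.g (Q.e'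 3) (π u)) * (Q.g (Q.e' 2) (π v)) * (Q.g (Q.e' 3) (π w)) + (1) * (Q.g (Q.e 2) t) * (Q.g (Q.e' 3) (π u)) * (Q.g (Q.e' 3) (π v)) * (Q.g (Q.e' 2) (π w)) + (3) * (Q.g (Q.e 3) t) * (Q.g (Q.e' 3) (π u)) * (Q.g (Q.e' 3) (π v)) * (Q.g (Q.e' 3) (π w))) * (hA (Q.e 3) (Q.e 3) c d)
    + (-1) * ((1) * (Q.g (Q.e 0) t) * (Q.g (Q.e' 0) (π u)) * (Q.g (Q.e' 3) (π v)) * (Q.g (Q.e' 3) (π w)) + (1) * (Q.g (Q.e 0) t) * (Q.g (Q.e' 3) (π u)) * (Q.g (Q.e' 0) (π v)) * (Q.g (Q.e' 3) (π w)) + (1) * (Q.g (Q.e 0) t) * (Q.g (Q.e' 3) (π u)) * (Q.g (Q.e' 3) (π v)) * (Q.g (Q.e' 0) (π w)) + (1) * (Q.g (Q.e 1) t) * (Q.g (Q.e' 1) (π u)) * (Q.g (Q.e' 3) (π v)) * (Q.g (Q.e' 3) (π w)) + (1) * (Q.g (Q.e 1) t) * (Q.g (Q.e' 3) (π u)) *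 (Q.g (Q.e' 1) (π v)) * (Q.g (Q.e' 3) (π w)) + (1) * (Q.g (Q.e 1) t) * (Q.g (Q.e' 3) (π u)) * (Q.g (Q.e' 3) (π v)) * (Q.g (Q.e' 1) (π w)) + (1) * (Q.g (Q.e 2) t) * (Q.g (Q.e' 2) (π u)) * (Q.g (Q.e' 3) (π v)) * (Q.g (Q.e' 3) (π w)) + (1) * (Q.g (Q.e 2) t) * (Q.g (Q.e' 3) (π u)) * (Q.g (Q.e' 2) (π v)) * (Q.g (Q.e' 3) (π w)) + (1) * (Q.g (Q.e 2) t) * (Q.g (Q.e' 3) (π u)) * (Q.g (Q.e' 3) (π v)) * (Q.g (Q.e' 2) (π w)) + (3) * (Q.g (Q.e 3) t) * (Q.g (Q.e' 3) (π u)) * (Q.g (Q.e' 3) (π v)) * (Q.g (Q.e' 3) (π w))) * (L (Q.e 3) (Q.e 3) c d) * (hf_two (Q := Q))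

end Star

section Core
open Finset
variable {Q : RAPM 4} (L : Q.V →ₗ[Q.C] Q.V →ₗ[Q.C] Q.V →ₗ[Q.C] Q.V →ₗ[Q.C] Q.C)
  (π : Q.V →ₗ[Q.C] Q.V)

lemma eqI (hidem : ∀ a, π (π a) = π a)
    (hadj : ∀ a b, Q.g (π a) b = Q.g a (π b))
    (htrm : ∑ i, Q.g (Q.e' i) (π (Q.e i)) = 2)
    (hA : ∀ x y z w, L x y z w = - L y x z w)
    (habs : ∀ a b c' d', L (π a) (π b) c' d' = L (π a) (π b) (π c') (π d')) :
    ∀ u v t' d, L (π u) (π v) (π t') d =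
      - (∑ i, L (π v) (π (Q.e i)) (π (Q.e' i)) (π d)) * Q.g (π u) t'
      + (∑ i, L (π u) (π (Q.e i)) (π (Q.e' i)) (π d)) * Q.g (π v) t' := by
  intro u v t' d
  have hsum : ∑ i, (L (π u) (π v) (Q.e' i) d * Q.g (π (Q.e i)) t'
      + L (π v) (π (Q.e i)) (Q.e' i) d * Q.g (π u) t'
      + L (π (Q.e i)) (π u) (Q.e' i) d * Q.g (π v) t') = 0 :=
    Finset.sum_eq_zero fun i _ => star L π hidem htrm hA u v (Q.e i) (Q.e' i) d t'
  rw [Finset.sum_add_distrib, Finset.sum_add_distrib] at hsum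
  have h1 : ∑ i, L (π u) (π v) (Q.e' i) d * Q.g (π (Q.e i)) t'
      = L (π u) (π v) (π t') d := by
    have key : ∀ i : Fin 4, L (π u) (π v) (Q.e' i) d * Q.g (π (Q.e i)) t'
        = Q.g (Q.e i) (π t') * (((L (π u) (π v)).flip d) (Q.e' i)) := fun i => by
      rw [LinearMap.flip_apply, hadj (Q.e i) t', mul_comm]
    rw [Finset.sum_congr rfl fun i _ => key i, ctrE' ((L (π u) (π v)).flip d) (π t'),
      LinearMap.flip_apply]
  have h2 : ∑ i, L (π v) (π (Q.e i)) (Q.e' i) d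
      = ∑ i, L (π v) (π (Q.e i)) (π (Q.e' i)) (π d) :=
    Finset.sum_congr rfl fun i _ => habs v (Q.e i) (Q.e' i) d
  have h3 : ∑ i, L (π (Q.e i)) (π u) (Q.e' i) d
      = - ∑ i, L (π u) (π (Q.e i)) (π (Q.e' i)) (π d) := by
    rw [← Finset.sum_neg_distrib]
    refine Finset.sum_congr rfl fun i _ => ?_
    rw [← habs u (Q.e i) (Q.e' i) d]
    linear_combination hA (π (Q.e i)) (π u) (Q.e' i) d
  rw [← Finset.sum_mul, ← Finset.sum_mul, h2, h3, h1] at hsum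
  linear_combination hsum

lemma einstein (hidem : ∀ a, π (π a) = π a)
    (hadj : ∀ a b, Q.g (π a) b = Q.g a (π b))
    (htrm : ∑ i, Q.g (Q.e' i) (π (Q.e i)) = 2)
    (hA : ∀ x y z w, L x y z w = - L y x z w)
    (hB : ∀ x y z w, L x y z w = - L x y w z)
    (habs : ∀ a b c' d', L (π a) (π b) c' d' = L (π a) (π b) (π c') (π d')) :
    ∀ u t', (2:Q.C) * (∑ i, L (π u) (π (Q.e i)) (π (Q.e' i)) (π t'))
      = (∑ j, ∑ i, L (π (Q.e j)) (π (Q.e i)) (π (Q.e' i)) (π (Q.e' j)))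
        * Q.g (π u) t' := by
  intro u t'
  have hinst : ∑ j, L (π u) (π (Q.e j)) (π t') (Q.e' j) =
      ∑ j, (- (∑ i, L (π (Q.e j)) (π (Q.e i)) (π (Q.e' i)) (π (Q.e' j))) * Q.g (π u) t'
        + (∑ i, L (π u) (π (Q.e i)) (π (Q.e' i)) (π (Q.e' j))) * Q.g (π (Q.e j)) t') :=
    Finset.sum_congr rfl fun j _ => eqI L π hidem hadj htrm hA habs u (Q.e j) t' (Q.e' j)
  have hL1 : ∑ j, L (π u) (π (Q.e j)) (π t') (Q.e' j)
      = - ∑ j, L (π u) (π (Q.e j)) (π (Q.e' j)) (π t') := by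
    rw [← Finset.sum_neg_distrib]
    refine Finset.sum_congr rfl fun j _ => ?_
    rw [habs u (Q.e j) (π t') (Q.e' j), hidem t']
    linear_combination hB (π u) (π (Q.e j)) (π t') (π (Q.e' j))
  have hL2 : ∑ j, (∑ i, L (π u) (π (Q.e i)) (π (Q.e' i)) (π (Q.e' j))) * Q.g (π (Q.e j)) t'
      = ∑ i, L (π u) (π (Q.e i)) (π (Q.e' i)) (π t') := by
    have hphi : ∀ j : Fin 4,
        (∑ i, L (π u) (π (Q.e i)) (π (Q.e' i)) (π (Q.e' j))) * Q.g (π (Q.e j)) t'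
        = Q.g (Q.e j) (π t') *
          ((∑ i, (L (π u) (π (Q.e i)) (π (Q.e' i))) ∘ₗ π) (Q.e' j)) := fun j => by
      rw [LinearMap.sum_apply, hadj (Q.e j) t', mul_comm]
      simp only [LinearMap.comp_apply]
    rw [Finset.sum_congr rfl fun j _ => hphi j,
      ctrE' (∑ i, (L (π u) (π (Q.e i)) (π (Q.e' i))) ∘ₗ π) (π t')]
    simp only [LinearMap.sum_apply, LinearMap.comp_apply]
    exact Finset.sum_congr rfl fun i _ => by rw [hidem t']
  have hRfirst : ∑ j, (- (∑ i, L (π (Q.e j)) (π (Q.e i)) (π (Q.e' i)) (π (Q.e' j)))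
        * Q.g (π u) t')
      = - (∑ j, ∑ i, L (π (Q.e j)) (π (Q.e i)) (π (Q.e' i)) (π (Q.e' j))) * Q.g (π u) t' := by
    rw [← Finset.sum_mul, Finset.sum_neg_distrib, neg_mul]
  rw [Finset.sum_add_distrib, hL1, hL2, hRfirst] at hinst
  linear_combination - hinst

/-- the structure of `L` on a pure block -/
lemma core (hidem : ∀ a, π (π a) = π a)
    (hadj : ∀ a b, Q.g (π a) b = Q.g a (π b))
    (htrm : ∑ i, Q.g (Q.e' i) (π (Q.e i)) = 2)
    (hA : ∀ x y z w, L x y z w = - L y x z w)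
    (hB : ∀ x y z w, L x y z w = - L x y w z)
    (habs : ∀ a b c' d', L (π a) (π b) c' d' = L (π a) (π b) (π c') (π d')) :
    ∀ x y z w, L (π x) (π y) (π z) (π w) =
      hf Q * (∑ j, ∑ i, L (π (Q.e j)) (π (Q.e i)) (π (Q.e' i)) (π (Q.e' j)))
        * (Q.g (π x) (π w) * Q.g (π y) (π z) - Q.g (π y) (π w) * Q.g (π x) (π z)) := by
  intro x y z w
  have E1 := eqI L π hidem hadj htrm hA habs x y (π z) (π w)
  simp only [hidem] at E1
  have E2 := einstein L π hidem hadj htrm hA hB habs y w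
  have E3 := einstein L π hidem hadj htrm hA hB habs x w
  have h2 : Q.g (π y) (π w) = Q.g (π y) w := by rw [← hadj (π y) w, hidem y]
  have h3 : Q.g (π x) (π w) = Q.g (π x) w := by rw [← hadj (π x) w, hidem x]
  set t := ∑ j, ∑ i, L (π (Q.e j)) (π (Q.e i)) (π (Q.e' i)) (π (Q.e' j)) with ht
  set r2 := ∑ i, L (π y) (π (Q.e i)) (π (Q.e' i)) (π w) with hr2
  set r3 := ∑ i, L (π x) (π (Q.e i)) (π (Q.e' i)) (π w) with hr3
  linear_combination E1 + (hf Q * Q.g (π y) (π z)) * E3 - (hf Q * Q.g (π x) (π z)) * E2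
    + (r2 * Q.g (π x) (π z) - r3 * Q.g (π y) (π z)) * (hf_two (Q := Q))
    - (hf Q * t * Q.g (π y) (π z)) * h3 + (hf Q * t * Q.g (π x) (π z)) * h2

end Core

section Blocks
open Finset
variable {Q : RAPM 4} (L : Q.V →ₗ[Q.C] Q.V →ₗ[Q.C] Q.V →ₗ[Q.C] Q.V →ₗ[Q.C] Q.C)

namespace PT
variable (hL : Q.isPtensor (fun x y z w => L x y z w))
include hL

lemma hPP' : ∀ x y z w, L x y (Q.P z) (Q.P w) = L x y z w := fun x y z w => hL.2 x y z w

lemma h34pq : ∀ x y a b, L x y (pp Q a) (qq Q b) = 0 := by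
  intro x y a b
  have h := hPP' L hL x y (pp Q a) (qq Q b)
  rw [P_pp, P_qq, map_neg] at h
  exact half_cancel _ (by linear_combination - h)

lemma h34qp : ∀ x y a b, L x y (qq Q a) (pp Q b) = 0 := by
  intro x y a b
  have h := hPP' L hL x y (qq Q a) (pp Q b)
  rw [P_qq, P_pp, map_neg, LinearMap.neg_apply] at h
  exact half_cancel _ (by linear_combination - h)

lemma h12pq : ∀ a b z w, L (pp Q a) (qq Q b) z w = 0 := by
  intro a b z w
  rw [pairsym L hL]
  exact h34pq L hL z w a b

lemma h12qp : ∀ a b z w, L (qq Q a) (pp Q b) z w = 0 := by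
  intro a b z w
  rw [pairsym L hL]
  exact h34qp L hL z w a b

lemma hcrossP : ∀ a b c d, L (pp Q a) (pp Q b) (qq Q c) (qq Q d) = 0 := by
  intro a b c d
  have Bi := hL.1.2.2 (pp Q a) (pp Q b) (qq Q c) (qq Q d)
  simp only at Bi
  rw [h12pq L hL b c (pp Q a) (qq Q d), h12qp L hL c a (pp Q b) (qq Q d)] at Bi
  linear_combination Bi

lemma hcrossQ : ∀ a b c d, L (qq Q a) (qq Q b) (pp Q c) (pp Q d) = 0 := by
  intro a b c d
  have Bi := hL.1.2.2 (qq Q a) (qq Q b) (pp Q c) (pp Q d)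
  simp only at Bi
  rw [h12qp L hL b c (qq Q a) (pp Q d), h12pq L hL c a (qq Q b) (pp Q d)] at Bi
  linear_combination Bi

lemma habsP : ∀ a b c d, L (pp Q a) (pp Q b) c d
    = L (pp Q a) (pp Q b) (pp Q c) (pp Q d) := by
  intro a b c d
  conv_lhs => rw [show c = pp Q c + qq Q c from (pq_compl c).symm,
    show d = pp Q d + qq Q d from (pq_compl d).symm]
  simp only [map_add, LinearMap.add_apply]
  rw [h34pq L hL, h34qp L hL, hcrossP L hL]
  ring

lemma habsQ : ∀ a b c d, L (qq Q a) (qq Q b) c d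
    = L (qq Q a) (qq Q b) (qq Q c) (qq Q d) := by
  intro a b c d
  conv_lhs => rw [show c = pp Q c + qq Q c from (pq_compl c).symm,
    show d = pp Q d + qq Q d from (pq_compl d).symm]
  simp only [map_add, LinearMap.add_apply]
  rw [h34pq L hL, h34qp L hL, hcrossQ L hL]
  ring

lemma decomp : ∀ x y z w, L x y z w
    = L (pp Q x) (pp Q y) (pp Q z) (pp Q w) + L (qq Q x) (qq Q y) (qq Q z) (qq Q w) := by
  intro x y z w
  conv_lhs => rw [show x = pp Q x + qq Q x from (pq_compl x).symm,
    show y = pp Q y + qq Q y from (pq_compl y).symm]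
  simp only [map_add, LinearMap.add_apply]
  rw [h12pq L hL, h12qp L hL, habsP L hL, habsQ L hL]
  ring

end PT
end Blocks

section Traces
open Finset
variable {Q : RAPM 4} (L : Q.V →ₗ[Q.C] Q.V →ₗ[Q.C] Q.V →ₗ[Q.C] Q.V →ₗ[Q.C] Q.C)

lemma pp_P (v : Q.V) : pp Q (Q.P v) = pp Q v := by
  rw [pp_apply, pp_apply, Q.Pinvol, add_comm]
lemma qq_P (v : Q.V) : qq Q (Q.P v) = - qq Q v := by
  rw [qq_apply, qq_apply, Q.Pinvol, ← smul_neg, neg_sub]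

namespace PT

/-- generic double-trace swap for a π-block of `L` -/
lemma swapPi (π : Q.V →ₗ[Q.C] Q.V) :
    ∑ i, ∑ k, L (π (Q.e' k)) (π (Q.e i)) (π (Q.e' i)) (π (Q.e k))
    = ∑ j, ∑ i, L (π (Q.e j)) (π (Q.e i)) (π (Q.e' i)) (π (Q.e' j)) := by
  have h1 : ∀ (c : Fin 4 → Q.C) (w : Q.V),
      (fun u w => ∑ i, L (π u) (π (Q.e i)) (π (Q.e' i)) (π w)) (∑ j, c j • Q.e j) w
      = ∑ j, c j * (fun u w => ∑ i, L (π u) (π (Q.e i)) (π (Q.e' i)) (π w)) (Q.e j) w := by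
    intro c w
    simp only [map_sum, map_smul, LinearMap.sum_apply, LinearMap.smul_apply, smul_eq_mul,
      Finset.mul_sum]
    rw [Finset.sum_comm]
  have h2 : ∀ (v : Q.V) (c : Fin 4 → Q.C),
      (fun u w => ∑ i, L (π u) (π (Q.e i)) (π (Q.e' i)) (π w)) v (∑ j, c j • Q.e j)
      = ∑ j, c j * (fun u w => ∑ i, L (π u) (π (Q.e i)) (π (Q.e' i)) (π w)) v (Q.e j) := by
    intro v c
    simp only [map_sum, map_smul, LinearMap.sum_apply, LinearMap.smul_apply, smul_eq_mul,
      Finset.mul_sum]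
    rw [Finset.sum_comm]
  have hsw := trace_swap (fun u w => ∑ i, L (π u) (π (Q.e i)) (π (Q.e' i)) (π w)) h1 h2
  rw [Finset.sum_comm]
  exact hsw.symm

variable (hL : Q.isPtensor (fun x y z w => L x y z w))
include hL

lemma scal_eq : Q.scal (fun x y z w => L x y z w)
    = (∑ j, ∑ i, L (pp Q (Q.e j)) (pp Q (Q.e i)) (pp Q (Q.e' i)) (pp Q (Q.e' j)))
    + (∑ j, ∑ i, L (qq Q (Q.e j)) (qq Q (Q.e i)) (qq Q (Q.e' i)) (qq Q (Q.e' j))) := by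
  simp only [RAPM.scal, RAPM.ric]
  rw [Finset.sum_congr rfl fun i _ => Finset.sum_congr rfl fun k _ =>
    decomp L hL (Q.e' k) (Q.e i) (Q.e' i) (Q.e k)]
  rw [Finset.sum_congr rfl fun i _ => Finset.sum_add_distrib, Finset.sum_add_distrib]
  rw [swapPi L (pp Q), swapPi L (qq Q)]

lemma scalStar_eq : Q.scalStar (fun x y z w => L x y z w)
    = (∑ j, ∑ i, L (pp Q (Q.e j)) (pp Q (Q.e i)) (pp Q (Q.e' i)) (pp Q (Q.e' j)))
    - (∑ j, ∑ i, L (qq Q (Q.e j)) (qq Q (Q.e i)) (qq Q (Q.e' i)) (qq Q (Q.e' j))) := by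
  simp only [RAPM.scalStar, RAPM.ricStar]
  have hterm : ∀ i k : Fin 4, L (Q.e' k) (Q.e i) (Q.e' i) (Q.P (Q.e k))
      = L (pp Q (Q.e' k)) (pp Q (Q.e i)) (pp Q (Q.e' i)) (pp Q (Q.e k))
      - L (qq Q (Q.e' k)) (qq Q (Q.e i)) (qq Q (Q.e' i)) (qq Q (Q.e k)) := by
    intro i k
    have h := decomp L hL (Q.e' k) (Q.e i) (Q.e' i) (Q.P (Q.e k))
    rw [pp_P, qq_P, map_neg] at h
    linear_combination h
  rw [Finset.sum_congr rfl fun i _ => Finset.sum_congr rfl fun k _ => hterm i k]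
  rw [Finset.sum_congr rfl fun i _ => Finset.sum_sub_distrib _ _, Finset.sum_sub_distrib]
  rw [swapPi L (pp Q), swapPi L (qq Q)]

end PT
end Traces

section Final
open Finset
variable {Q : RAPM 4}

lemma gpp_eq (u v : Q.V) :
    Q.g (pp Q u) (pp Q v) = hf Q * (Q.g u v + Q.g u (Q.P v)) := by
  rw [g_pp u (pp Q v), pp_idem v, pp_apply, map_smul, map_add, smul_eq_mul]

lemma gqq_eq (u v : Q.V) :
    Q.g (qq Q u) (qq Q v) = hf Q * (Q.g u v - Q.g u (Q.P v)) := by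
  rw [g_qq u (qq Q v), qq_idem v, qq_apply, map_smul, map_sub, smul_eq_mul]

lemma hf_cube : algebraMap ℝ Q.C ((1:ℝ)/8) = hf Q * (hf Q * hf Q) := by
  rw [hf, ← map_mul, ← map_mul]
  norm_num

end Final

open RAPM in
theorem statement5' (Q : RAPM 4) (htr : Q.trP = 0)
    (L : Q.V →ₗ[Q.C] Q.V →ₗ[Q.C] Q.V →ₗ[Q.C] Q.V →ₗ[Q.C] Q.C)
    (hL : Q.isPtensor (fun x y z w => L x y z w)) :
    ∀ x y z w, L x y z w =
      ((1 : ℝ)/8) • (Q.scal (fun x y z w => L x y z w) *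
          (Q.pi1 x y z w + Q.pi2 x y z w) +
        Q.scalStar (fun x y z w => L x y z w) * Q.pi3 x y z w) := by
  intro x y z w
  have hA : ∀ x y z w, L x y z w = - L y x z w := fun a b c d => hL.1.1 a b c d
  have hB : ∀ x y z w, L x y z w = - L x y w z := fun a b c d => hL.1.2.1 a b c d
  have keyP := core L (pp Q) pp_idem g_pp (tr_pp htr) hA hB (PT.habsP L hL) x y z w
  have keyQ := core L (qq Q) qq_idem g_qq (tr_qq htr) hA hB (PT.habsQ L hL) x y z w
  have hdec := PT.decomp L hL x y z w
  have hscal := PT.scal_eq L hL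
  have hstar := PT.scalStar_eq L hL
  simp only [RAPM.pi1, RAPM.pi2, RAPM.pi3, RAPM.psi1, RAPM.psi2, RAPM.gP, Algebra.smul_def]
  rw [hf_cube, show algebraMap ℝ Q.C ((1:ℝ)/2) = hf Q from rfl]
  simp only [gpp_eq, gqq_eq] at keyP keyQ
  set SC := Q.scal (fun x y z w => L x y z w) with hSC
  set ST := Q.scalStar (fun x y z w => L x y z w) with hST
  set G1 := Q.g y z; set G2 := Q.g x w; set G3 := Q.g x z; set G4 := Q.g y w
  set H1 := Q.g y (Q.P z); set H2 := Q.g x (Q.P w); set H3 := Q.g x (Q.P z)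
  set H4 := Q.g y (Q.P w)
  linear_combination hdec + keyP + keyQ
    - (hf Q * (hf Q * hf Q) * (G1*G2 - G3*G4 + H1*H2 - H3*H4) * SC) * (hf_two (Q := Q))
    - (hf Q * (hf Q * hf Q) * (G1*G2 - G3*G4 + H1*H2 - H3*H4)) * hscal
    - (hf Q * (hf Q * hf Q) * (G1*H2 - G3*H4 + H1*G2 - H3*G4)) * hstar



open RAPM in
/-- On a 4-dimensional Riemannian almost product manifold with `tr P = 0`,
every Riemannian P-tensor `L` has the form
`L = (1/8){τ(L)(π₁+π₂) + τ*(L)π₃}`. -/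
theorem statement5 (Q : RAPM 4) (htr : Q.trP = 0)
    (L : Q.V →ₗ[Q.C] Q.V →ₗ[Q.C] Q.V →ₗ[Q.C] Q.V →ₗ[Q.C] Q.C)
    (hL : Q.isPtensor (fun x y z w => L x y z w)) :
    ∀ x y z w, L x y z w =
      ((1 : ℝ)/8) • (Q.scal (fun x y z w => L x y z w) *
          (Q.pi1 x y z w + Q.pi2 x y z w) +
        Q.scalStar (fun x y z w => L x y z w) * Q.pi3 x y z w) := by
  exact statement5' Q htr L hL
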